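/- arXiv:2107.03273 — 4 statements merged into one kernel-verified Lean document; each statement's English description precedes it below -/
import Mathlib

section
/- Let T > 0, c₁ > 0, p > 0 and p' ≥ max(1,p). There exists a constant C < ∞, depending only on (p, p', T, c₁), such that the following holds. Let n ≥ 1; for k = 1,…,n let x^k, w^k, β ∈ C([0,T];ℝ^d) with w^k_0 = β_0 = 0, and let g^k : [0,T] → ℝ^d be Borel measurable and integrable, satisfying for all k and all t ∈ [0,T]: x^k_t = x^k_0 + ∫₀ᵗ g^k(s) ds + w^k_t + β_t, and for almost every s ∈ [0,T] and all k: |g^k(s)| ≤ c₁ ( 1 + |x^k_s| + ( (1/n) Σ_{j=1}^n |x^j_s|^p )^{1/max(1,p)} ). Then for every k = 1,…,n and every t ∈ [0,T], ‖x^k‖_t^{p'} ≤ C ( 1 + |x^k_0|^{p'} + (1/n) Σ_{j=1}^n |x^j_0|^{p'} + ‖w^k‖_t^{p'} + (1/n) Σ_{j=1}^n ‖w^j‖_t^{p'} + ‖β‖_t^{p'} ). -/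
open MeasureTheory Set

noncomputable section

def pathSup {d : ℕ} (x : ℝ → EuclideanSpace ℝ (Fin d)) (t : ℝ) : ℝ :=
  ⨆ s : Icc (0 : ℝ) t, ‖x s.1‖

section PathSupAux

variable {d : ℕ} {x : ℝ → EuclideanSpace ℝ (Fin d)} {t : ℝ}

lemma pathSup_bdd (hx : Continuous x) (t : ℝ) :
    BddAbove (Set.range fun s : Icc (0:ℝ) t => ‖x s.1‖) := by
  refine BddAbove.mono ?_ (((isCompact_Icc (a := (0:ℝ)) (b := t)).image hx.norm).bddAbove)
  rintro r ⟨s, rfl⟩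
  exact ⟨s.1, s.2, rfl⟩

lemma norm_le_pathSup (hx : Continuous x) {s : ℝ} (h0 : 0 ≤ s) (hst : s ≤ t) :
    ‖x s‖ ≤ pathSup x t :=
  le_ciSup (pathSup_bdd hx t) ⟨s, h0, hst⟩

lemma pathSup_le (ht : 0 ≤ t) {c : ℝ} (h : ∀ s, 0 ≤ s → s ≤ t → ‖x s‖ ≤ c) :
    pathSup x t ≤ c := by
  have : Nonempty (Icc (0:ℝ) t) := ⟨⟨0, le_refl _, ht⟩⟩
  exact ciSup_le fun s => h s.1 s.2.1 s.2.2

lemma pathSup_nonneg (hx : Continuous x) (ht : 0 ≤ t) : 0 ≤ pathSup x t :=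
  (norm_nonneg (x 0)).trans (norm_le_pathSup hx le_rfl ht)

lemma pathSup_mono (hx : Continuous x) {s : ℝ} (hs : 0 ≤ s) (hst : s ≤ t) :
    pathSup x s ≤ pathSup x t :=
  pathSup_le hs fun r hr hrs => norm_le_pathSup hx hr (hrs.trans hst)

end PathSupAux

/-- The weighted `ℓ^m` mean. -/
def Mmean (n : ℕ) (m : ℝ) (F : Fin n → ℝ) : ℝ :=
  ((1 / (n:ℝ)) * ∑ j, F j ^ m) ^ (1/m)

section MmeanAux

variable {n : ℕ} {m : ℝ} {F G : Fin n → ℝ}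

lemma Mmean_nonneg (hm : 0 < m) (hF : ∀ j, 0 ≤ F j) : 0 ≤ Mmean n m F := by
  apply Real.rpow_nonneg
  have : 0 ≤ ∑ j, F j ^ m := Finset.sum_nonneg fun j _ => Real.rpow_nonneg (hF j) m
  positivity

lemma Mmean_mono (hm : 0 < m) (hF : ∀ j, 0 ≤ F j) (hFG : ∀ j, F j ≤ G j) :
    Mmean n m F ≤ Mmean n m G := by
  apply Real.rpow_le_rpow
  · have : 0 ≤ ∑ j, F j ^ m := Finset.sum_nonneg fun j _ => Real.rpow_nonneg (hF j) m
    positivity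
  · apply mul_le_mul_of_nonneg_left _ (by positivity)
    exact Finset.sum_le_sum fun j _ => Real.rpow_le_rpow (hF j) (hFG j) hm.le
  · positivity

lemma Mmean_const (hn : 0 < n) (hm : 0 < m) {c : ℝ} (hc : 0 ≤ c) :
    Mmean n m (fun _ => c) = c := by
  have hn' : (0:ℝ) < n := by exact_mod_cast hn
  have h : (1 / (n:ℝ)) * ∑ _j : Fin n, c ^ m = c ^ m := by
    rw [Finset.sum_const, Finset.card_univ, Fintype.card_fin]
    field_simp
    rw [nsmul_eq_mul]
  rw [Mmean, h, ← Real.rpow_mul hc, mul_one_div, div_self hm.ne', Real.rpow_one]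

lemma Mmean_add_le (hm : 1 ≤ m) (hF : ∀ j, 0 ≤ F j) (hG : ∀ j, 0 ≤ G j) :
    Mmean n m (fun j => F j + G j) ≤ Mmean n m F + Mmean n m G := by
  have hn : (0:ℝ) ≤ 1 / (n:ℝ) := by positivity
  have hmink := Real.Lp_add_le_of_nonneg (Finset.univ (α := Fin n)) hm
    (f := F) (g := G) (fun j _ => hF j) (fun j _ => hG j)
  have hsF : 0 ≤ ∑ j, F j ^ m := Finset.sum_nonneg fun j _ => Real.rpow_nonneg (hF j) m
  have hsG : 0 ≤ ∑ j, G j ^ m := Finset.sum_nonneg fun j _ => Real.rpow_nonneg (hG j) m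
  have hsFG : 0 ≤ ∑ j, (F j + G j) ^ m :=
    Finset.sum_nonneg fun j _ => Real.rpow_nonneg (add_nonneg (hF j) (hG j)) m
  calc Mmean n m (fun j => F j + G j)
      = (1/(n:ℝ)) ^ (1/m) * (∑ j, (F j + G j) ^ m) ^ (1/m) := Real.mul_rpow hn hsFG
    _ ≤ (1/(n:ℝ)) ^ (1/m) * ((∑ j, F j ^ m) ^ (1/m) + (∑ j, G j ^ m) ^ (1/m)) := by
        apply mul_le_mul_of_nonneg_left _ (Real.rpow_nonneg hn _)
        exact hmink
    _ = Mmean n m F + Mmean n m G := by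
        rw [mul_add, Mmean, Mmean, Real.mul_rpow hn hsF, Real.mul_rpow hn hsG]

lemma Mmean_smul (hm : 0 < m) {c : ℝ} (hc : 0 ≤ c) (hF : ∀ j, 0 ≤ F j) :
    Mmean n m (fun j => c * F j) = c * Mmean n m F := by
  have hsF : 0 ≤ ∑ j, F j ^ m := Finset.sum_nonneg fun j _ => Real.rpow_nonneg (hF j) m
  have hn : (0:ℝ) ≤ 1 / (n:ℝ) := by positivity
  have h1 : ∀ j : Fin n, (c * F j) ^ m = c ^ m * F j ^ m := fun j => Real.mul_rpow hc (hF j)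
  have h2 : (1/(n:ℝ)) * ∑ j, (c * F j) ^ m = c ^ m * ((1/(n:ℝ)) * ∑ j, F j ^ m) := by
    simp_rw [h1, ← Finset.mul_sum]; ring
  rw [Mmean, h2, Real.mul_rpow (Real.rpow_nonneg hc m) (by positivity),
    ← Real.rpow_mul hc, mul_one_div, div_self hm.ne', Real.rpow_one, Mmean]

/-- Jensen / power-mean comparison for the weighted mean. -/
lemma Mmean_rpow_le {q : ℝ} (hn : 1 ≤ n) (hm : 0 < m)
    (hq : m ≤ q) (hF : ∀ j, 0 ≤ F j) :
    (Mmean n m F) ^ q ≤ (1/(n:ℝ)) * ∑ j, F j ^ q := by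
  have hn' : (0:ℝ) < n := by exact_mod_cast hn
  have hS : 0 ≤ (1 / (n:ℝ)) * ∑ j, F j ^ m := by
    have : 0 ≤ ∑ j, F j ^ m := Finset.sum_nonneg fun j _ => Real.rpow_nonneg (hF j) m
    positivity
  have hr : 1 ≤ (1/m) * q := by
    rw [one_div, inv_mul_eq_div, le_div_iff₀ hm]
    linarith
  have key := Real.rpow_arith_mean_le_arith_mean_rpow (Finset.univ (α := Fin n))
    (fun _ => 1/(n:ℝ)) (fun j => F j ^ m) (fun j _ => by positivity)
    (by rw [Finset.sum_const, Finset.card_univ, Fintype.card_fin]; field_simp; rw [nsmul_eq_mul]; exact mul_one_div_cancel hn'.ne')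
    (fun j _ => Real.rpow_nonneg (hF j) m) hr
  have hexp : ∀ j : Fin n, ((F j) ^ m) ^ ((1/m)*q) = F j ^ q := fun j => by
    rw [← Real.rpow_mul (hF j)]
    congr 1
    field_simp
  unfold Mmean
  calc ((1/(n:ℝ) * ∑ j, F j ^ m) ^ (1/m)) ^ q
      = (1/(n:ℝ) * ∑ j, F j ^ m) ^ ((1/m)*q) := (Real.rpow_mul hS _ _).symm
    _ = (∑ j, (1/(n:ℝ)) * F j ^ m) ^ ((1/m)*q) := by rw [Finset.mul_sum]
    _ ≤ ∑ j, (1/(n:ℝ)) * ((F j ^ m) ^ ((1/m)*q)) := key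
    _ = (1/(n:ℝ)) * ∑ j, F j ^ q := by
        simp_rw [hexp]
        rw [← Finset.mul_sum]

end MmeanAux

/-- Subadditivity of `x ^ q` for `0 ≤ q ≤ 1`. -/
lemma add_rpow_le' {a b q : ℝ} (ha : 0 ≤ a) (hb : 0 ≤ b) (hq0 : 0 ≤ q) (hq1 : q ≤ 1) :
    (a + b) ^ q ≤ a ^ q + b ^ q := by
  have h := NNReal.rpow_add_le_add_rpow a.toNNReal b.toNNReal hq0 hq1
  have := NNReal.coe_le_coe.mpr h
  push_cast [NNReal.coe_rpow, Real.coe_toNNReal a ha, Real.coe_toNNReal b hb] at this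
  exact this

/-- Crude three-term power bound. -/
lemma rpow_add3_le {a b c q : ℝ} (ha : 0 ≤ a) (hb : 0 ≤ b) (hc : 0 ≤ c) (hq : 0 ≤ q) :
    (a + b + c) ^ q ≤ 3 ^ q * (a ^ q + b ^ q + c ^ q) := by
  set M := max a (max b c) with hM
  have hMa : a ≤ M := le_max_left _ _
  have hMb : b ≤ M := (le_max_left _ _).trans (le_max_right _ _)
  have hMc : c ≤ M := (le_max_right _ _).trans (le_max_right _ _)
  have hM0 : 0 ≤ M := ha.trans hMa
  have h2 : (a + b + c) ^ q ≤ (3 * M) ^ q :=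
    Real.rpow_le_rpow (by linarith) (by linarith) hq
  have h3 : (3 * M) ^ q = 3 ^ q * M ^ q := Real.mul_rpow (by norm_num) hM0
  have h4 : M ^ q ≤ a ^ q + b ^ q + c ^ q := by
    have hq_a : 0 ≤ a ^ q := Real.rpow_nonneg ha q
    have hq_b : 0 ≤ b ^ q := Real.rpow_nonneg hb q
    have hq_c : 0 ≤ c ^ q := Real.rpow_nonneg hc q
    rcases max_cases a (max b c) with ⟨h, _⟩ | ⟨h, _⟩
    · rw [hM, h]; linarith
    · rcases max_cases b c with ⟨h', _⟩ | ⟨h', _⟩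
      · rw [hM, h, h']; linarith
      · rw [hM, h, h']; linarith
  calc (a + b + c) ^ q ≤ 3 ^ q * M ^ q := by rw [← h3]; exact h2
    _ ≤ 3 ^ q * (a ^ q + b ^ q + c ^ q) := by
        apply mul_le_mul_of_nonneg_left h4 (Real.rpow_nonneg (by norm_num) q)

set_option maxHeartbeats 2000000 in
/-- Pathwise Gronwall-type estimate for interacting particle systems: individual bound. -/
theorem particle_system_pathwise_estimate
    (T c₁ p p' : ℝ) (hT : 0 < T) (hc₁ : 0 < c₁) (hp : 0 < p) (hp' : max 1 p ≤ p') :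
    ∃ C : ℝ, ∀ (d : ℕ) (n : ℕ), 1 ≤ n →
      ∀ (x w : Fin n → ℝ → EuclideanSpace ℝ (Fin d)) (β : ℝ → EuclideanSpace ℝ (Fin d))
        (g : Fin n → ℝ → EuclideanSpace ℝ (Fin d)),
      (∀ k, Continuous (x k)) → (∀ k, Continuous (w k)) → Continuous β →
      (∀ k, w k 0 = 0) → β 0 = 0 →
      (∀ k, IntervalIntegrable (g k) volume 0 T) →
      (∀ k, ∀ t ∈ Icc (0 : ℝ) T,
        x k t = x k 0 + (∫ s in (0 : ℝ)..t, g k s) + w k t + β t) →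
      (∀ᵐ s ∂(volume.restrict (Icc (0 : ℝ) T)), ∀ k,
        ‖g k s‖ ≤ c₁ * (1 + ‖x k s‖
          + ((1 / (n : ℝ)) * ∑ j : Fin n, ‖x j s‖ ^ p) ^ (1 / max 1 p))) →
      ∀ k, ∀ t ∈ Icc (0 : ℝ) T,
        pathSup (x k) t ^ p' ≤ C * (1 + ‖x k 0‖ ^ p'
          + (1 / (n : ℝ)) * ∑ j : Fin n, ‖x j 0‖ ^ p'
          + pathSup (w k) t ^ p'
          + (1 / (n : ℝ)) * ∑ j : Fin n, pathSup (w j) t ^ p'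
          + pathSup β t ^ p') := by
  have hm1 : (1:ℝ) ≤ max 1 p := le_max_left _ _
  have hm0 : (0:ℝ) < max 1 p := lt_of_lt_of_le one_pos hm1
  have hpm : p ≤ max 1 p := le_max_right _ _
  set m := max 1 p with hmdef
  set Nc : ℕ := ⌈4*c₁*T⌉₊ with hNcdef
  set N : ℕ := Nc + 1 with hNdef
  have hNR : 4*c₁*T ≤ (N:ℝ) := by
    calc 4*c₁*T ≤ (Nc : ℝ) := Nat.le_ceil _
      _ ≤ N := by exact_mod_cast Nat.le_succ _
  have hN0 : (0:ℝ) < N := by positivity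
  have hNcast : (N:ℝ) = (Nc:ℝ) + 1 := by rw [hNdef]; push_cast; ring
  have hNpow : (4:ℝ)^(N+1) = 16 * 4^Nc := by rw [hNdef]; ring
  clear_value m Nc N
  refine ⟨2 * ((9 * 4^(N+1) : ℝ)) ^ p', ?_⟩
  intro d n hn x w β g hxc hwc hβc hw0 hβ0 hgi hxeq hgb k t ht
  obtain ⟨ht0, htT⟩ := ht
  have hn0 : (0:ℝ) < n := by exact_mod_cast hn
  have hnn : 0 < n := hn
  have hp'1 : 1 ≤ p' := le_trans hm1 hp'
  have hp'0 : 0 ≤ p' := by linarith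
  -- basic objects
  set f : Fin n → ℝ → ℝ := fun j s => pathSup (x j) s with hfdef
  set W : Fin n → ℝ := fun j => pathSup (w j) t with hWdef
  set B : ℝ := pathSup β t with hBdef
  set A : Fin n → ℝ := fun j => ‖x j 0‖ + W j + B with hAdef
  set Φ : Fin n → ℝ → ℝ := fun j s => ∫ r in (0:ℝ)..s, ‖g j r‖ with hPdef
  set v : ℝ → ℝ := fun s => Mmean n m (fun j => f j s) with hvdef
  set Ab : ℝ := Mmean n m A with hAbdef
  set τ : ℝ := t / N with hτdef
  set Gb : ℕ → ℝ := fun i => Mmean n m (fun j => Φ j ((i:ℝ)*τ)) with hGbdef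
  clear_value f W B A Φ v Ab τ Gb
  -- rewrite the goal in terms of the opaque constants
  have hWj : ∀ j, pathSup (w j) t = W j := fun j => by rw [hWdef]
  have hBe : pathSup β t = B := by rw [hBdef]
  have hfke : pathSup (x k) t = f k t := by rw [hfdef]
  rw [hfke]
  simp only [hWj]
  -- elementary facts
  have hf_nn : ∀ (j : Fin n) {s : ℝ}, 0 ≤ s → 0 ≤ f j s := by
    intro j s hs; rw [hfdef]; exact pathSup_nonneg (hxc j) hs
  have hxf : ∀ (j : Fin n) {s : ℝ}, 0 ≤ s → ‖x j s‖ ≤ f j s := by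
    intro j s hs; rw [hfdef]; exact norm_le_pathSup (hxc j) hs le_rfl
  have hf_mono : ∀ (j : Fin n) {a b : ℝ}, 0 ≤ a → a ≤ b → f j a ≤ f j b := by
    intro j a b ha hab; rw [hfdef]; exact pathSup_mono (hxc j) ha hab
  have hW_nn : ∀ j, 0 ≤ W j := by
    intro j; rw [← hWj j]; exact pathSup_nonneg (hwc j) ht0
  have hB_nn : 0 ≤ B := by rw [← hBe]; exact pathSup_nonneg hβc ht0
  have hA_nn : ∀ j, 0 ≤ A j := fun j => by
    have h1 := norm_nonneg (x j 0); have h2 := hW_nn j; have h3 := hB_nn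
    rw [hAdef]; dsimp only; linarith
  have hv_nn : ∀ {s : ℝ}, 0 ≤ s → 0 ≤ v s := by
    intro s hs; rw [hvdef]; exact Mmean_nonneg hm0 (fun j => hf_nn j hs)
  have hv_mono : ∀ {a b : ℝ}, 0 ≤ a → a ≤ b → v a ≤ v b := by
    intro a b ha hab; rw [hvdef]
    exact Mmean_mono hm0 (fun j => hf_nn j ha) (fun j => hf_mono j ha hab)
  have hAb_nn : 0 ≤ Ab := by rw [hAbdef]; exact Mmean_nonneg hm0 hA_nn
  -- integrability
  have hgin : ∀ (j : Fin n) (a b : ℝ), 0 ≤ a → b ≤ T → a ≤ b →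
      IntervalIntegrable (fun r => ‖g j r‖) volume a b := by
    intro j a b ha hb hab
    exact ((hgi j).mono_set (by
      rw [uIcc_of_le hab, uIcc_of_le hT.le]
      exact Icc_subset_Icc ha hb)).norm
  have hΦ_mono : ∀ (j : Fin n) {a b : ℝ}, 0 ≤ a → a ≤ b → b ≤ T → Φ j a ≤ Φ j b := by
    intro j a b ha hab hb
    have h2 : Φ j a + ∫ r in a..b, ‖g j r‖ = Φ j b := by
      simp only [hPdef]
      exact intervalIntegral.integral_add_adjacent_intervals
        (hgin j 0 a le_rfl (hab.trans hb) ha) (hgin j a b ha hb hab)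
    have h3 : 0 ≤ ∫ r in a..b, ‖g j r‖ :=
      intervalIntegral.integral_nonneg hab (fun u _ => norm_nonneg _)
    linarith
  have hΦ0 : ∀ j : Fin n, Φ j 0 = 0 := by
    intro j; simp only [hPdef]; exact intervalIntegral.integral_same
  have hΦ_nn : ∀ (j : Fin n) {s : ℝ}, 0 ≤ s → s ≤ T → 0 ≤ Φ j s := by
    intro j s hs hsT
    have h := hΦ_mono j le_rfl hs hsT
    rw [hΦ0 j] at h; exact h
  -- Master inequality 1
  have hM1 : ∀ {s : ℝ}, 0 ≤ s → s ≤ t → ∀ j, f j s ≤ A j + Φ j s := by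
    intro s hs0 hst j
    rw [hfdef]
    apply pathSup_le hs0
    intro r hr0 hrs
    rw [hxeq j r ⟨hr0, (hrs.trans hst).trans htT⟩]
    have e1 : ‖∫ u in (0:ℝ)..r, g j u‖ ≤ Φ j r := by
      simp only [hPdef]
      exact intervalIntegral.norm_integral_le_integral_norm hr0
    have e2 : Φ j r ≤ Φ j s := hΦ_mono j hr0 hrs (hst.trans htT)
    have e3 : ‖w j r‖ ≤ W j := by
      rw [← hWj j]; exact norm_le_pathSup (hwc j) hr0 (hrs.trans hst)
    have e4 : ‖β r‖ ≤ B := by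
      rw [← hBe]; exact norm_le_pathSup hβc hr0 (hrs.trans hst)
    have e5 : ‖x j 0 + (∫ u in (0:ℝ)..r, g j u) + w j r + β r‖
        ≤ ‖x j 0‖ + ‖∫ u in (0:ℝ)..r, g j u‖ + ‖w j r‖ + ‖β r‖ := by
      refine (norm_add_le _ _).trans ?_
      refine add_le_add ((norm_add_le _ _).trans (add_le_add (norm_add_le _ _) le_rfl)) le_rfl
    have e6 : A j = ‖x j 0‖ + W j + B := by rw [hAdef]
    linarith
  -- pointwise coupling bound
  have hcpl : ∀ {r : ℝ}, 0 ≤ r → r ≤ t →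
      ((1/(n:ℝ)) * ∑ j, ‖x j r‖ ^ p) ^ (1/m) ≤ 1 + v r := by
    intro r hr0 hrt
    have h1 : ∀ j : Fin n, ‖x j r‖ ^ p ≤ 1 + f j r ^ m := by
      intro j
      have hfx := hxf j hr0
      have h2 : ‖x j r‖ ^ p ≤ f j r ^ p := Real.rpow_le_rpow (norm_nonneg _) hfx hp.le
      rcases le_or_gt (f j r) 1 with h | h
      · have h3 : f j r ^ p ≤ 1 := Real.rpow_le_one (hf_nn j hr0) h hp.le
        have h4 : 0 ≤ f j r ^ m := Real.rpow_nonneg (hf_nn j hr0) m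
        linarith
      · have h3 : f j r ^ p ≤ f j r ^ m := Real.rpow_le_rpow_of_exponent_le h.le hpm
        linarith
    have hsum : (1/(n:ℝ)) * ∑ j, ‖x j r‖ ^ p
        ≤ 1 + (1/(n:ℝ)) * ∑ j, f j r ^ m := by
      have h2 : ∑ j, ‖x j r‖^p ≤ ∑ j : Fin n, ((1:ℝ) + f j r ^ m) :=
        Finset.sum_le_sum fun j _ => h1 j
      have h3 : ∑ j : Fin n, ((1:ℝ) + f j r ^ m) = (n:ℝ) + ∑ j, f j r ^ m := by
        rw [Finset.sum_add_distrib, Finset.sum_const, Finset.card_univ, Fintype.card_fin]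
        simp
      have h4 : (1/(n:ℝ)) * ∑ j, ‖x j r‖^p ≤ (1/(n:ℝ)) * ((n:ℝ) + ∑ j, f j r ^ m) := by
        apply mul_le_mul_of_nonneg_left _ (by positivity)
        rw [← h3]; exact h2
      calc (1/(n:ℝ)) * ∑ j, ‖x j r‖^p ≤ (1/(n:ℝ)) * ((n:ℝ) + ∑ j, f j r ^ m) := h4
        _ = 1 + (1/(n:ℝ)) * ∑ j, f j r ^ m := by field_simp
    have hXnn : 0 ≤ (1/(n:ℝ)) * ∑ j, ‖x j r‖^p := by
      have h : 0 ≤ ∑ j, ‖x j r‖^p :=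
        Finset.sum_nonneg fun j _ => Real.rpow_nonneg (norm_nonneg _) p
      positivity
    have hVnn : 0 ≤ (1/(n:ℝ)) * ∑ j, f j r ^ m := by
      have h : 0 ≤ ∑ j, f j r ^ m :=
        Finset.sum_nonneg fun j _ => Real.rpow_nonneg (hf_nn j hr0) m
      positivity
    calc ((1/(n:ℝ)) * ∑ j, ‖x j r‖ ^ p) ^ (1/m)
        ≤ (1 + (1/(n:ℝ)) * ∑ j, f j r ^ m) ^ (1/m) :=
          Real.rpow_le_rpow hXnn hsum (by positivity)
      _ ≤ 1 ^ (1/m) + ((1/(n:ℝ)) * ∑ j, f j r ^ m) ^ (1/m) :=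
          add_rpow_le' zero_le_one hVnn (by positivity) (by
            rw [div_le_one hm0]; exact hm1)
      _ = 1 + v r := by rw [Real.one_rpow, hvdef]; rfl
  -- Master inequality 2
  have hM2 : ∀ {a b : ℝ}, 0 ≤ a → a ≤ b → b ≤ t → ∀ j,
      Φ j b ≤ Φ j a + c₁ * (b - a) * (2 + f j b + v b) := by
    intro a b ha hab hbt j
    have hbT : b ≤ T := hbt.trans htT
    have hint1 := hgin j a b ha hbT hab
    have hadd : Φ j a + ∫ r in a..b, ‖g j r‖ = Φ j b := by
      simp only [hPdef]
      exact intervalIntegral.integral_add_adjacent_intervals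
        (hgin j 0 a le_rfl (hab.trans hbT) ha) hint1
    have hle : ∀ᵐ r ∂(volume.restrict (Icc a b)), ‖g j r‖ ≤ c₁ * (2 + f j b + v b) := by
      have hsub : Icc a b ⊆ Icc 0 T := Icc_subset_Icc ha hbT
      have h1 := ae_restrict_of_ae_restrict_of_subset hsub hgb
      have h2 := ae_restrict_mem (μ := volume) (measurableSet_Icc : MeasurableSet (Icc a b))
      filter_upwards [h1, h2] with r hr hrab
      obtain ⟨hra, hrb⟩ := hrab
      have hr0 : 0 ≤ r := ha.trans hra
      have hrt : r ≤ t := hrb.trans hbt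
      have e1 := hr j
      have e2 : ‖x j r‖ ≤ f j b := (hxf j hr0).trans (hf_mono j hr0 hrb)
      have e3 := hcpl hr0 hrt
      have e4 : v r ≤ v b := hv_mono hr0 hrb
      refine e1.trans ?_
      apply mul_le_mul_of_nonneg_left _ hc₁.le
      have e5 := hxf j hr0
      linarith
    have hmono := intervalIntegral.integral_mono_ae_restrict hab hint1
      (intervalIntegrable_const) hle
    rw [intervalIntegral.integral_const, smul_eq_mul] at hmono
    have heq : (b - a) * (c₁ * (2 + f j b + v b)) = c₁ * (b - a) * (2 + f j b + v b) := by ring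
    rw [heq] at hmono
    linarith
  -- grid setup
  have hτ0 : 0 ≤ τ := by rw [hτdef]; exact div_nonneg ht0 hN0.le
  have htN : (N:ℝ) * τ = t := by rw [hτdef]; field_simp
  have hc₁τ : c₁ * τ ≤ 1/4 := by
    have h4 : 4*c₁*t ≤ (N:ℝ) := by
      have h5 := mul_le_mul_of_nonneg_left htT hc₁.le
      linarith
    have h6 : c₁ * τ = (c₁*t)/N := by rw [hτdef]; ring
    rw [h6, div_le_iff₀ hN0]
    linarith
  have hgrid : ∀ i : ℕ, i ≤ N → 0 ≤ (i:ℝ)*τ ∧ (i:ℝ)*τ ≤ t := by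
    intro i hi
    refine ⟨mul_nonneg (Nat.cast_nonneg i) hτ0, ?_⟩
    calc (i:ℝ)*τ ≤ (N:ℝ)*τ := by
          apply mul_le_mul_of_nonneg_right _ hτ0
          exact_mod_cast hi
      _ = t := htN
  have hΦnn' : ∀ i : ℕ, i ≤ N → ∀ j : Fin n, 0 ≤ Φ j ((i:ℝ)*τ) := by
    intro i hi j
    obtain ⟨h1, h2⟩ := hgrid i hi
    exact hΦ_nn j h1 (h2.trans htT)
  have hGb_nn : ∀ i : ℕ, i ≤ N → 0 ≤ Gb i := by
    intro i hi; rw [hGbdef]; exact Mmean_nonneg hm0 (hΦnn' i hi)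
  -- core step
  have hstep : ∀ i : ℕ, i < N → ∀ s, 0 ≤ s → s ≤ t → s ≤ ((i:ℝ)+1)*τ → ∀ j,
      f j s ≤ (4/3) * (A j + Φ j ((i:ℝ)*τ)) + (2/3 + (1/3) * v s) := by
    intro i hi s hs0 hst hsi j
    obtain ⟨hiτ0, hiτt⟩ := hgrid i hi.le
    have h5 : 0 ≤ 2 + f j s + v s := by
      have := hf_nn j hs0; have := hv_nn hs0; linarith
    have h1 : f j s ≤ A j + Φ j s := hM1 hs0 hst j
    have h7 : Φ j s ≤ Φ j ((i:ℝ)*τ) + 1/4*(2 + f j s + v s) := by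
      rcases le_total s ((i:ℝ)*τ) with h | h
      · have h8 := hΦ_mono j hs0 h (hiτt.trans htT)
        linarith
      · have h2 := hM2 hiτ0 h hst j
        have hsa : s - (i:ℝ)*τ ≤ τ := by
          have hx1 : ((i:ℝ)+1)*τ = (i:ℝ)*τ + τ := by ring
          linarith
        have h4 : c₁*(s - (i:ℝ)*τ) ≤ 1/4 :=
          le_trans (mul_le_mul_of_nonneg_left hsa hc₁.le) hc₁τ
        have h6 : c₁*(s - (i:ℝ)*τ)*(2 + f j s + v s) ≤ (1/4)*(2 + f j s + v s) :=
          mul_le_mul_of_nonneg_right h4 h5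
        linarith
    linarith [h1, h7]
  have hcast1 : ∀ i : ℕ, ((i+1:ℕ):ℝ) = (i:ℝ)+1 := fun i => by push_cast; ring
  -- v bound
  have hvstep : ∀ i : ℕ, i < N → ∀ s, 0 ≤ s → s ≤ t → s ≤ ((i:ℝ)+1)*τ →
      v s ≤ 2*Ab + 2*Gb i + 1 := by
    intro i hi s hs0 hst hsi
    have hΦi := hΦnn' i hi.le
    have hvs := hv_nn hs0
    have hc : 0 ≤ 2/3 + (1/3) * v s := by linarith
    have hvs_eq : v s = Mmean n m (fun j => f j s) := by rw [hvdef]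
    have hb1 : v s ≤ Mmean n m (fun j => (4/3)*(A j + Φ j ((i:ℝ)*τ)) + (2/3 + (1/3)*v s)) :=
      calc v s = Mmean n m (fun j => f j s) := hvs_eq
        _ ≤ _ := Mmean_mono hm0 (fun j => hf_nn j hs0) (fun j => hstep i hi s hs0 hst hsi j)
    have hX_nn : ∀ j : Fin n, 0 ≤ (4/3)*(A j + Φ j ((i:ℝ)*τ)) := fun j => by
      have := hA_nn j; have := hΦi j; positivity
    have hb2 : Mmean n m (fun j => (4/3)*(A j + Φ j ((i:ℝ)*τ)) + (2/3 + (1/3)*v s))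
        ≤ Mmean n m (fun j => (4/3)*(A j + Φ j ((i:ℝ)*τ))) + (2/3 + (1/3)*v s) := by
      refine (Mmean_add_le hm1 hX_nn (fun _ => hc)).trans ?_
      rw [Mmean_const hnn hm0 hc]
    have hb3 : Mmean n m (fun j => (4/3)*(A j + Φ j ((i:ℝ)*τ)))
        = (4/3) * Mmean n m (fun j => A j + Φ j ((i:ℝ)*τ)) :=
      Mmean_smul hm0 (by norm_num) (fun j => add_nonneg (hA_nn j) (hΦi j))
    have hb4 : Mmean n m (fun j => A j + Φ j ((i:ℝ)*τ)) ≤ Ab + Gb i := by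
      rw [hAbdef, hGbdef]
      exact Mmean_add_le hm1 hA_nn hΦi
    linarith [hb1, hb2, hb3, hb4]
  -- grid increment bound
  have hΦstep : ∀ i : ℕ, i < N → ∀ j,
      Φ j (((i:ℝ)+1)*τ) ≤ Φ j ((i:ℝ)*τ)
        + (1/2 + (1/4) * f j (((i:ℝ)+1)*τ) + (1/4) * v (((i:ℝ)+1)*τ)) := by
    intro i hi j
    have hg1 := hgrid (i+1) hi
    rw [hcast1 i] at hg1
    obtain ⟨hs10, hs1t⟩ := hg1
    obtain ⟨hi0, hit⟩ := hgrid i hi.le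
    have hab : (i:ℝ)*τ ≤ ((i:ℝ)+1)*τ := by nlinarith [hτ0]
    have h2 := hM2 hi0 hab hs1t j
    have heq : ((i:ℝ)+1)*τ - (i:ℝ)*τ = τ := by ring
    rw [heq] at h2
    have h5 : 0 ≤ 2 + f j (((i:ℝ)+1)*τ) + v (((i:ℝ)+1)*τ) := by
      have := hf_nn j hs10; have := hv_nn hs10; linarith
    have h6 : c₁ * τ * (2 + f j (((i:ℝ)+1)*τ) + v (((i:ℝ)+1)*τ))
        ≤ (1/4) * (2 + f j (((i:ℝ)+1)*τ) + v (((i:ℝ)+1)*τ)) :=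
      mul_le_mul_of_nonneg_right hc₁τ h5
    linarith
  -- recursion for Gb
  have hGstep : ∀ i : ℕ, i < N → Gb (i+1) ≤ 2*Gb i + Ab + 1 := by
    intro i hi
    have hg1 := hgrid (i+1) hi
    rw [hcast1 i] at hg1
    obtain ⟨hs10, hs1t⟩ := hg1
    have hv1 : v (((i:ℝ)+1)*τ) ≤ 2*Ab + 2*Gb i + 1 :=
      hvstep i hi _ hs10 hs1t le_rfl
    have hΦi := hΦnn' i hi.le
    have hvnn := hv_nn hs10
    have hc : 0 ≤ 1/2 + (1/4) * v (((i:ℝ)+1)*τ) := by linarith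
    have hΦi1' : ∀ j : Fin n, 0 ≤ Φ j (((i:ℝ)+1)*τ) := by
      have h := hΦnn' (i+1) hi
      rw [hcast1 i] at h
      exact h
    have hfnn' : ∀ j : Fin n, 0 ≤ (1/4) * f j (((i:ℝ)+1)*τ) := fun j =>
      mul_nonneg (by norm_num) (hf_nn j hs10)
    have hb1 : Gb (i+1) ≤ Mmean n m (fun j =>
        (Φ j ((i:ℝ)*τ) + (1/4) * f j (((i:ℝ)+1)*τ)) + (1/2 + (1/4) * v (((i:ℝ)+1)*τ))) :=
      calc Gb (i+1) = Mmean n m (fun j => Φ j (((i+1:ℕ):ℝ)*τ)) := by rw [hGbdef]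
        _ = Mmean n m (fun j => Φ j (((i:ℝ)+1)*τ)) := by rw [hcast1 i]
        _ ≤ _ := by
            refine Mmean_mono hm0 (fun j => hΦi1' j) (fun j => ?_)
            have := hΦstep i hi j
            linarith
    have hb2 : Mmean n m (fun j =>
        (Φ j ((i:ℝ)*τ) + (1/4) * f j (((i:ℝ)+1)*τ)) + (1/2 + (1/4) * v (((i:ℝ)+1)*τ)))
        ≤ Mmean n m (fun j => Φ j ((i:ℝ)*τ) + (1/4) * f j (((i:ℝ)+1)*τ))
          + (1/2 + (1/4) * v (((i:ℝ)+1)*τ)) := by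
      refine (Mmean_add_le hm1 (fun j => add_nonneg (hΦi j) (hfnn' j)) (fun _ => hc)).trans ?_
      rw [Mmean_const hnn hm0 hc]
    have hb3 : Mmean n m (fun j => Φ j ((i:ℝ)*τ) + (1/4) * f j (((i:ℝ)+1)*τ))
        ≤ Gb i + Mmean n m (fun j => (1/4) * f j (((i:ℝ)+1)*τ)) := by
      rw [hGbdef]
      exact Mmean_add_le hm1 hΦi hfnn'
    have hvs_eq : v (((i:ℝ)+1)*τ) = Mmean n m (fun j => f j (((i:ℝ)+1)*τ)) := by rw [hvdef]
    have hb4 : Mmean n m (fun j => (1/4) * f j (((i:ℝ)+1)*τ)) = (1/4) * v (((i:ℝ)+1)*τ) := by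
      rw [Mmean_smul hm0 (by norm_num) (fun j => hf_nn j hs10), hvs_eq]
    linarith [hb1, hb2, hb3, hb4, hv1]
  have hGb0 : Gb 0 = 0 := by
    rw [hGbdef]
    simp only [Nat.cast_zero, zero_mul, hΦ0]
    exact Mmean_const hnn hm0 le_rfl
  have hGball : ∀ i : ℕ, i ≤ N → Gb i ≤ (2^i - 1)*(Ab + 1) := by
    intro i
    induction i with
    | zero => intro _; rw [hGb0]; norm_num
    | succ i ih =>
        intro hi
        have hi' : i < N := lt_of_lt_of_le (Nat.lt_succ_self i) hi
        have h1 := hGstep i hi'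
        have h2 := ih hi'.le
        have h2' : 2*Gb i ≤ 2*((2^i - 1)*(Ab + 1)) := by linarith
        have h3 : (2:ℝ)^(i+1) = 2^i*2 := pow_succ 2 i
        rw [h3]
        linarith
  -- recursion for Φ k
  have hPhik : ∀ i : ℕ, i ≤ N → Φ k ((i:ℝ)*τ) ≤ (4^i - 1)*(A k + Ab + 1) := by
    intro i
    induction i with
    | zero =>
        intro _
        simp only [Nat.cast_zero, zero_mul, hΦ0, pow_zero]
        norm_num
    | succ i ih =>
        intro hi
        have hi' : i < N := lt_of_lt_of_le (Nat.lt_succ_self i) hi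
        have ihh := ih hi'.le
        have hg1 := hgrid (i+1) hi
        rw [hcast1 i] at hg1
        obtain ⟨hs10, hs1t⟩ := hg1
        have h1 := hΦstep i hi' k
        have h2 := hstep i hi' (((i:ℝ)+1)*τ) hs10 hs1t le_rfl k
        have h3 := hvstep i hi' (((i:ℝ)+1)*τ) hs10 hs1t le_rfl
        have h4 := hGball i hi'.le
        have h24 : (2:ℝ)^i ≤ 4^i := by
          apply pow_le_pow_left₀ (by norm_num) (by norm_num)
        have h41 : (1:ℝ) ≤ 4^i := one_le_pow₀ (by norm_num)
        have hAk := hA_nn k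
        have e1 : 0 ≤ ((4:ℝ)^i - 2^i)*Ab := mul_nonneg (by linarith) hAb_nn
        have e2 : 0 ≤ ((4:ℝ)^i - 1)*(A k) := mul_nonneg (by linarith) hAk
        have hmul : ((2:ℝ)^i - 1)*(Ab+1) ≤ ((4:ℝ)^i - 1)*(A k + Ab + 1) := by nlinarith
        have hps : (4:ℝ)^(i+1) = 4^i*4 := pow_succ 4 i
        rw [hcast1 i, hps]
        nlinarith [h1, h2, h3, h4, hmul, ihh]
  -- final assembly
  have hNcN : Nc < N := by rw [hNdef]; exact Nat.lt_succ_self Nc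
  have htτ : t = ((Nc:ℝ)+1)*τ := by rw [← htN, hNcast]
  have h2 := hstep Nc hNcN t ht0 le_rfl (le_of_eq htτ) k
  have h3 := hvstep Nc hNcN t ht0 le_rfl (le_of_eq htτ)
  have h4 := hGball Nc hNcN.le
  have ihh := hPhik Nc hNcN.le
  have h24 : (2:ℝ)^Nc ≤ 4^Nc := pow_le_pow_left₀ (by norm_num) (by norm_num) Nc
  have h41 : (1:ℝ) ≤ (4:ℝ)^Nc := one_le_pow₀ (by norm_num)
  have hAk := hA_nn k
  have e1 : 0 ≤ ((4:ℝ)^Nc - 2^Nc)*Ab := mul_nonneg (by linarith) hAb_nn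
  have e2 : 0 ≤ ((4:ℝ)^Nc - 1)*(A k) := mul_nonneg (by linarith) hAk
  have hmul : ((2:ℝ)^Nc - 1)*(Ab+1) ≤ ((4:ℝ)^Nc - 1)*(A k + Ab + 1) := by nlinarith
  have e3 : 0 ≤ ((4:ℝ)^Nc - 1)*(A k + Ab + 1) := mul_nonneg (by linarith) (by linarith)
  have e4 : 0 ≤ (4:ℝ)^Nc * (A k + Ab + 1) := mul_nonneg (by positivity) (by linarith)
  have hfD : f k t ≤ 4^(N+1) * (A k + Ab + 1) := by
    rw [hNpow]
    nlinarith [h2, h3, h4, hmul, ihh, e3, e4]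
  -- pass to p'-th powers
  have hD0 : (0:ℝ) ≤ A k + Ab + 1 := by linarith
  have hfk0 : 0 ≤ f k t := hf_nn k ht0
  have hR4 : (0:ℝ) ≤ 4^(N+1) := by positivity
  have s1 : f k t ^ p' ≤ ((4:ℝ)^(N+1) * (A k + Ab + 1)) ^ p' :=
    Real.rpow_le_rpow hfk0 hfD hp'0
  have s2 : ((4:ℝ)^(N+1) * (A k + Ab + 1)) ^ p'
      = ((4:ℝ)^(N+1))^p' * (A k + Ab + 1)^p' := Real.mul_rpow hR4 hD0
  have hQ0 : (0:ℝ) ≤ (3:ℝ)^p' := Real.rpow_nonneg (by norm_num) p'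
  have hQ1 : (1:ℝ) ≤ (3:ℝ)^p' := Real.one_le_rpow (by norm_num) hp'0
  have hR'0 : (0:ℝ) ≤ ((4:ℝ)^(N+1))^p' := Real.rpow_nonneg hR4 p'
  have s3 : (A k + Ab + 1)^p' ≤ 3^p' * ((A k)^p' + Ab^p' + 1) := by
    have h := rpow_add3_le (hA_nn k) hAb_nn zero_le_one hp'0
    rwa [Real.one_rpow] at h
  have s4 : (A k)^p' ≤ 3^p' * (‖x k 0‖^p' + (W k)^p' + B^p') := by
    have h := rpow_add3_le (norm_nonneg (x k 0)) (hW_nn k) hB_nn hp'0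
    have hA : A k = ‖x k 0‖ + W k + B := by rw [hAdef]
    rw [hA]; exact h
  have s5 : Ab ^ p' ≤ (1/(n:ℝ)) * ∑ j, (A j)^p' := by
    rw [hAbdef]; exact Mmean_rpow_le hn hm0 hp' hA_nn
  have s6 : (1/(n:ℝ)) * ∑ j, (A j)^p'
      ≤ 3^p' * ((1/(n:ℝ)) * ∑ j, ‖x j 0‖^p' + (1/(n:ℝ)) * ∑ j, (W j)^p' + B^p') := by
    have hpt : ∀ j : Fin n, (A j)^p' ≤ 3^p' * (‖x j 0‖^p' + (W j)^p' + B^p') := fun j => by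
      have h := rpow_add3_le (norm_nonneg (x j 0)) (hW_nn j) hB_nn hp'0
      have hA : A j = ‖x j 0‖ + W j + B := by rw [hAdef]
      rw [hA]; exact h
    have hsle : ∑ j, (A j)^p' ≤ ∑ j : Fin n, 3^p' * (‖x j 0‖^p' + (W j)^p' + B^p') :=
      Finset.sum_le_sum fun j _ => hpt j
    have hseq : ∑ j : Fin n, (3:ℝ)^p' * (‖x j 0‖^p' + (W j)^p' + B^p')
        = 3^p' * ((∑ j, ‖x j 0‖^p') + (∑ j, (W j)^p') + (n:ℝ)*B^p') := by
      rw [← Finset.mul_sum]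
      congr 1
      rw [Finset.sum_add_distrib, Finset.sum_add_distrib, Finset.sum_const,
        Finset.card_univ, Fintype.card_fin]
      push_cast
      ring
    calc (1/(n:ℝ)) * ∑ j, (A j)^p'
        ≤ (1/(n:ℝ)) * (3^p' * ((∑ j, ‖x j 0‖^p') + (∑ j, (W j)^p') + (n:ℝ)*B^p')) := by
          apply mul_le_mul_of_nonneg_left _ (by positivity)
          rw [← hseq]; exact hsle
      _ = 3^p' * ((1/(n:ℝ)) * ∑ j, ‖x j 0‖^p' + (1/(n:ℝ)) * ∑ j, (W j)^p' + B^p') := by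
          field_simp
  -- nonnegativity of all pieces
  have n1 : (0:ℝ) ≤ ‖x k 0‖^p' := Real.rpow_nonneg (norm_nonneg _) p'
  have n2 : (0:ℝ) ≤ (W k)^p' := Real.rpow_nonneg (hW_nn k) p'
  have n3 : (0:ℝ) ≤ B^p' := Real.rpow_nonneg hB_nn p'
  have n4 : (0:ℝ) ≤ (1/(n:ℝ)) * ∑ j, ‖x j 0‖^p' :=
    mul_nonneg (by positivity)
      (Finset.sum_nonneg fun j _ => Real.rpow_nonneg (norm_nonneg _) p')
  have n5 : (0:ℝ) ≤ (1/(n:ℝ)) * ∑ j, (W j)^p' :=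
    mul_nonneg (by positivity)
      (Finset.sum_nonneg fun j _ => Real.rpow_nonneg (hW_nn j) p')
  have key : (A k)^p' + Ab^p' + 1
      ≤ 3^p' * (2 * (1 + ‖x k 0‖^p' + (1/(n:ℝ)) * ∑ j, ‖x j 0‖^p'
        + (W k)^p' + (1/(n:ℝ)) * ∑ j, (W j)^p' + B^p')) := by
    have s56 := s5.trans s6
    have hsum : ‖x k 0‖^p' + (W k)^p' + B^p'
        + ((1/(n:ℝ)) * ∑ j, ‖x j 0‖^p' + (1/(n:ℝ)) * ∑ j, (W j)^p' + B^p') + 1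
        ≤ 2 * (1 + ‖x k 0‖^p' + (1/(n:ℝ)) * ∑ j, ‖x j 0‖^p'
          + (W k)^p' + (1/(n:ℝ)) * ∑ j, (W j)^p' + B^p') := by
      linarith
    have h7 := mul_le_mul_of_nonneg_left hsum hQ0
    linarith [s4, s56, hQ1, h7]
  have h9eq : ((9 * 4^(N+1):ℝ))^p' = 3^p' * (3^p' * ((4:ℝ)^(N+1))^p') := by
    rw [show (9 * 4^(N+1):ℝ) = 3*(3*4^(N+1)) by ring,
      Real.mul_rpow (by norm_num) (by positivity),
      Real.mul_rpow (by norm_num) (by positivity)]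
  calc f k t ^ p'
      ≤ ((4:ℝ)^(N+1) * (A k + Ab + 1)) ^ p' := s1
    _ = ((4:ℝ)^(N+1))^p' * (A k + Ab + 1)^p' := s2
    _ ≤ ((4:ℝ)^(N+1))^p' * (3^p' * ((A k)^p' + Ab^p' + 1)) :=
        mul_le_mul_of_nonneg_left s3 hR'0
    _ ≤ ((4:ℝ)^(N+1))^p' * (3^p' * (3^p' * (2 * (1 + ‖x k 0‖^p'
          + (1/(n:ℝ)) * ∑ j, ‖x j 0‖^p' + (W k)^p'
          + (1/(n:ℝ)) * ∑ j, (W j)^p' + B^p')))) := by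
        apply mul_le_mul_of_nonneg_left _ hR'0
        exact mul_le_mul_of_nonneg_left key hQ0
    _ = 2 * ((9 * 4^(N+1):ℝ))^p' * (1 + ‖x k 0‖^p'
          + (1/(n:ℝ)) * ∑ j, ‖x j 0‖^p' + (W k)^p'
          + (1/(n:ℝ)) * ∑ j, (W j)^p' + B^p') := by
        rw [h9eq]; ring

end
end

section
/- Let (𝒎_n)_{n∈ℕ} and 𝒎 be Borel probability measures on 𝒞^d such that 𝒎_n → 𝒎 in the topology of weak convergence. Then the marginal flows converge uniformly in the Lévy–Prokhorov metric: sup_{t∈[0,T]} d_LP(m_{n,t}, m_t) → 0 as n → ∞. Consequently, the map sending 𝒎 ∈ 𝒫(𝒞^d) (weak topology) to its marginal flow (m_t)_{t∈[0,T]} ∈ C([0,T]; (𝒫(ℝ^d), d_LP)) (supremum metric) is continuous. -/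
open MeasureTheory Set Filter
open scoped UniformConvergence

noncomputable section

/-- Lévy–Prokhorov edistance does not increase under pushforward by a 1-Lipschitz map. -/
lemma levyProkhorovEDist_map_le_aux {X Y : Type*}
    [MeasurableSpace X] [PseudoEMetricSpace X] [OpensMeasurableSpace X]
    [MeasurableSpace Y] [PseudoEMetricSpace Y] [BorelSpace Y]
    (μ ν : Measure X) {f : X → Y} (hf : LipschitzWith 1 f) :
    levyProkhorovEDist (μ.map f) (ν.map f) ≤ levyProkhorovEDist μ ν := by
  apply levyProkhorovEDist_le_of_forall
  intro ε B hε hεtop hB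
  have hfm : Measurable f := hf.continuous.measurable
  have hsub : Metric.thickening ε.toReal (f ⁻¹' B) ⊆
      f ⁻¹' (Metric.thickening ε.toReal B) := by
    intro x hx
    rw [Metric.mem_thickening_iff_exists_edist_lt] at hx
    obtain ⟨z, hz, hlt⟩ := hx
    rw [Set.mem_preimage, Metric.mem_thickening_iff_exists_edist_lt]
    exact ⟨f z, hz, lt_of_le_of_lt (by simpa using hf.edist_le_mul x z) hlt⟩
  constructor
  · rw [Measure.map_apply hfm hB,
      Measure.map_apply hfm (Metric.isOpen_thickening.measurableSet)]
    calc μ (f ⁻¹' B) ≤ ν (Metric.thickening ε.toReal (f ⁻¹' B)) + ε :=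
          left_measure_le_of_levyProkhorovEDist_lt hε (hfm hB)
      _ ≤ ν (f ⁻¹' (Metric.thickening ε.toReal B)) + ε := by
          gcongr
  · rw [Measure.map_apply hfm hB,
      Measure.map_apply hfm (Metric.isOpen_thickening.measurableSet)]
    calc ν (f ⁻¹' B) ≤ μ (Metric.thickening ε.toReal (f ⁻¹' B)) + ε :=
          right_measure_le_of_levyProkhorovEDist_lt hε (hfm hB)
      _ ≤ μ (f ⁻¹' (Metric.thickening ε.toReal B)) + ε := by
          gcongr

/-- Lévy–Prokhorov distance does not increase under pushforward by a 1-Lipschitz map. -/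
lemma levyProkhorovDist_map_le_aux {X Y : Type*}
    [MeasurableSpace X] [PseudoEMetricSpace X] [OpensMeasurableSpace X]
    [MeasurableSpace Y] [PseudoEMetricSpace Y] [BorelSpace Y]
    (μ ν : Measure X) [IsFiniteMeasure μ] [IsFiniteMeasure ν]
    {f : X → Y} (hf : LipschitzWith 1 f) :
    levyProkhorovDist (μ.map f) (ν.map f) ≤ levyProkhorovDist μ ν :=
  ENNReal.toReal_mono (levyProkhorovEDist_ne_top _ _)
    (levyProkhorovEDist_map_le_aux μ ν hf)

/-- Weak convergence on path space implies uniform (in time) convergence of the marginal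
flows in the Lévy–Prokhorov metric; consequently the marginal-flow map is continuous into
the space of continuous measure flows with the uniform topology. -/
theorem marginal_flows_converge_uniformly
    (d : ℕ) (T : ℝ) (hT : 0 < T)
    [MeasurableSpace C(Icc (0 : ℝ) T, EuclideanSpace ℝ (Fin d))]
    [BorelSpace C(Icc (0 : ℝ) T, EuclideanSpace ℝ (Fin d))]
    (m : ℕ → ProbabilityMeasure C(Icc (0 : ℝ) T, EuclideanSpace ℝ (Fin d)))
    (m₀ : ProbabilityMeasure C(Icc (0 : ℝ) T, EuclideanSpace ℝ (Fin d)))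
    (hconv : Tendsto m atTop (nhds m₀)) :
    Tendsto (fun n => ⨆ t : Icc (0 : ℝ) T,
        levyProkhorovDist
          (((m n).map (f := fun x => x t)
            (continuous_eval_const t).measurable.aemeasurable).toMeasure)
          ((m₀.map (f := fun x => x t)
            (continuous_eval_const t).measurable.aemeasurable).toMeasure))
      atTop (nhds 0)
    ∧ Continuous (fun ν : ProbabilityMeasure C(Icc (0 : ℝ) T, EuclideanSpace ℝ (Fin d)) =>
        (UniformFun.ofFun (fun t : Icc (0 : ℝ) T =>
          (LevyProkhorov.toMeasureEquiv (α := ProbabilityMeasure (EuclideanSpace ℝ (Fin d)))).symm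
            (ν.map (f := fun x => x t)
              (continuous_eval_const t).measurable.aemeasurable)) :
          Icc (0 : ℝ) T →ᵤ LevyProkhorov (ProbabilityMeasure (EuclideanSpace ℝ (Fin d))))) := by
  have hne : Nonempty (Icc (0 : ℝ) T) := ⟨⟨0, by constructor <;> [rfl; exact hT.le]⟩⟩
  -- evaluation maps are 1-Lipschitz
  have hLip : ∀ t : Icc (0 : ℝ) T,
      LipschitzWith 1 (fun x : C(Icc (0 : ℝ) T, EuclideanSpace ℝ (Fin d)) => x t) := by
    intro t
    refine LipschitzWith.of_dist_le_mul fun x y => ?_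
    simpa using ContinuousMap.dist_apply_le_dist (f := x) (g := y) t
  -- the uniform bound: LP distance of marginals ≤ LP distance on path space
  have key : ∀ (μ ν : ProbabilityMeasure C(Icc (0 : ℝ) T, EuclideanSpace ℝ (Fin d)))
      (t : Icc (0 : ℝ) T),
      levyProkhorovDist
        ((μ.map (f := fun x => x t)
          (continuous_eval_const t).measurable.aemeasurable).toMeasure)
        ((ν.map (f := fun x => x t)
          (continuous_eval_const t).measurable.aemeasurable).toMeasure)
      ≤ levyProkhorovDist μ.toMeasure ν.toMeasure := by
    intro μ ν t
    have h1 : (μ.map (f := fun x => x t)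
        (continuous_eval_const t).measurable.aemeasurable).toMeasure
        = μ.toMeasure.map (fun x => x t) :=
      μ.toMeasure_map _
    have h2 : (ν.map (f := fun x => x t)
        (continuous_eval_const t).measurable.aemeasurable).toMeasure
        = ν.toMeasure.map (fun x => x t) :=
      ν.toMeasure_map _
    rw [h1, h2]
    exact levyProkhorovDist_map_le_aux _ _ (hLip t)
  -- convergence in LP metric on path space
  have hconv' : Tendsto (fun n =>
        (LevyProkhorov.toMeasureEquiv (α :=
          ProbabilityMeasure C(Icc (0 : ℝ) T, EuclideanSpace ℝ (Fin d)))).symm (m n))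
      atTop (nhds ((LevyProkhorov.toMeasureEquiv (α :=
          ProbabilityMeasure C(Icc (0 : ℝ) T, EuclideanSpace ℝ (Fin d)))).symm m₀)) :=
    ((LevyProkhorov.probabilityMeasureHomeomorph).continuous.tendsto _).comp hconv
  have hLP : Tendsto (fun n => levyProkhorovDist (m n).toMeasure m₀.toMeasure)
      atTop (nhds 0) := by
    have := (tendsto_iff_dist_tendsto_zero).mp hconv'
    simpa [LevyProkhorov.dist_probabilityMeasure_def] using this
  constructor
  · -- squeeze
    refine squeeze_zero (fun n => ?_) (fun n => ?_) hLP
    · exact Real.iSup_nonneg fun t => ENNReal.toReal_nonneg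
    · exact ciSup_le fun t => key (m n) m₀ t
  · -- continuity via uniform continuity from the LP metric side
    have hG : UniformContinuous (fun ν : LevyProkhorov
        (ProbabilityMeasure C(Icc (0 : ℝ) T, EuclideanSpace ℝ (Fin d))) =>
        (UniformFun.ofFun (fun t : Icc (0 : ℝ) T =>
          (LevyProkhorov.toMeasureEquiv (α := ProbabilityMeasure (EuclideanSpace ℝ (Fin d)))).symm
            ((LevyProkhorov.toMeasureEquiv ν).map (f := fun x => x t)
              (continuous_eval_const t).measurable.aemeasurable)) :
          Icc (0 : ℝ) T →ᵤ LevyProkhorov (ProbabilityMeasure (EuclideanSpace ℝ (Fin d))))) := by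
      rw [UniformContinuous, (UniformFun.hasBasis_uniformity _ _).tendsto_right_iff]
      intro V hV
      obtain ⟨ε, εpos, hε⟩ := Metric.mem_uniformity_dist.mp hV
      filter_upwards [Metric.dist_mem_uniformity εpos] with p hp t
      exact hε (lt_of_le_of_lt
        (key (LevyProkhorov.toMeasureEquiv p.1) (LevyProkhorov.toMeasureEquiv p.2) t) hp)
    exact hG.continuous.comp
      (LevyProkhorov.probabilityMeasureHomeomorph).continuous
end
end

section
/- Let ψ : [0,T] × ℝ^d × 𝒫(ℝ^d) × A → ℝ be bounded and jointly Borel measurable, such that for each fixed t ∈ [0,T] the map (x, m, a) ↦ ψ(t, x, m, a) is continuous (with 𝒫(ℝ^d) carrying the weak topology). Then the functional Φ : 𝒫(𝒞^d × 𝒱) → ℝ defined by Φ(𝒎̄) = ∫_{𝒞^d × 𝒱} ( ∫_{[0,T]×A} ψ(t, x_t, m_t, a) q(dt, da) ) 𝒎̄(dx, dq), where m_t ∈ 𝒫(ℝ^d) denotes the pushforward of 𝒎̄ under the map (x,q) ↦ x_t, is continuous with respect to the topology of weak convergence on 𝒫(𝒞^d × 𝒱). -/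
set_option maxHeartbeats 2000000
set_option synthInstance.maxHeartbeats 400000

open MeasureTheory Set
open scoped ENNReal

noncomputable section

namespace RCFAux

open Filter Topology TopologicalSpace
open scoped NNReal BoundedContinuousFunction

variable {Ω : Type*} [MeasurableSpace Ω] [TopologicalSpace Ω] [OpensMeasurableSpace Ω]

/-- Convergence of probability measures can be tested on a countable dense family of
continuous functions (on a compact space). -/
lemma tendsto_of_forall_dense [CompactSpace Ω] {gs : ℕ → C(Ω, ℝ)} (hdense : DenseRange gs)
    {ι : Type*} {l : Filter ι} {μs : ι → ProbabilityMeasure Ω} {μ : ProbabilityMeasure Ω}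
    (h : ∀ n, Tendsto (fun i => ∫ ω, gs n ω ∂(μs i : Measure Ω)) l
      (𝓝 (∫ ω, gs n ω ∂(μ : Measure Ω)))) :
    Tendsto μs l (𝓝 μ) := by
  rw [ProbabilityMeasure.tendsto_iff_forall_integral_tendsto]
  intro f
  rw [Metric.tendsto_nhds]
  intro ε hε
  obtain ⟨n, hn⟩ := Metric.denseRange_iff.mp hdense f.toContinuousMap (ε/4) (by linarith)
  have key : ∀ ν : ProbabilityMeasure Ω,
      |∫ ω, f ω ∂(ν : Measure Ω) - ∫ ω, gs n ω ∂(ν : Measure Ω)| ≤ ε/4 := by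
    intro ν
    have hint1 : Integrable f (ν : Measure Ω) := f.integrable _
    have hint2 : Integrable (fun ω => gs n ω) (ν : Measure Ω) :=
      (BoundedContinuousFunction.mkOfCompact (gs n)).integrable _
    rw [← integral_sub hint1 hint2]
    have hb : ∀ ω, |f ω - gs n ω| ≤ ε/4 := by
      intro ω
      have h1 : dist (f.toContinuousMap ω) (gs n ω) ≤ dist f.toContinuousMap (gs n) :=
        ContinuousMap.dist_apply_le_dist ω
      have h2 : dist f.toContinuousMap (gs n) ≤ ε/4 := le_of_lt hn
      calc |f ω - gs n ω| = dist (f.toContinuousMap ω) (gs n ω) := by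
            rw [Real.dist_eq]; rfl
        _ ≤ _ := le_trans h1 h2
    calc |∫ ω, (f ω - gs n ω) ∂(ν : Measure Ω)|
        ≤ ∫ ω, |f ω - gs n ω| ∂(ν : Measure Ω) := by
          simpa using norm_integral_le_integral_norm (μ := (ν : Measure Ω))
            (f := fun ω => f ω - gs n ω)
      _ ≤ ∫ _ω, (ε/4) ∂(ν : Measure Ω) :=
          integral_mono (hint1.sub hint2).abs (integrable_const _) hb
      _ = ε/4 := by simp
  filter_upwards [Metric.tendsto_nhds.mp (h n) (ε/4) (by linarith)] with i hi
  have h1 := key (μs i)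
  have h2 := key μ
  rw [Real.dist_eq] at hi ⊢
  have tri := abs_sub_le (∫ ω, f ω ∂(μs i : Measure Ω)) (∫ ω, gs n ω ∂(μs i : Measure Ω))
    (∫ ω, f ω ∂(μ : Measure Ω))
  have tri2 := abs_sub_le (∫ ω, gs n ω ∂(μs i : Measure Ω)) (∫ ω, gs n ω ∂(μ : Measure Ω))
    (∫ ω, f ω ∂(μ : Measure Ω))
  rw [abs_sub_comm] at h2
  linarith [h1, hi, h2, tri, tri2]

/-- The space of probability measures on a nonempty compact metric space is
second countable. -/
lemma secondCountable_probabilityMeasure (Ω : Type*) [MetricSpace Ω] [CompactSpace Ω]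
    [Nonempty Ω] [MeasurableSpace Ω] [OpensMeasurableSpace Ω] :
    SecondCountableTopology (ProbabilityMeasure Ω) := by
  have hgs := denseRange_denseSeq C(Ω, ℝ)
  set gs := denseSeq C(Ω, ℝ) with hgs_def
  let J : ProbabilityMeasure Ω → ℕ → ℝ := fun μ n => ∫ ω, gs n ω ∂(μ : Measure Ω)
  have hcont : Continuous J := by
    refine continuous_pi fun n => ?_
    rw [continuous_iff_continuousAt]
    intro μ
    exact ProbabilityMeasure.tendsto_iff_forall_integral_tendsto.mp
      (tendsto_id (x := 𝓝 μ)) (BoundedContinuousFunction.mkOfCompact (gs n))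
  have hind : IsInducing J := by
    rw [isInducing_iff_nhds]
    intro μ
    refine le_antisymm ((hcont.tendsto μ).le_comap) ?_
    have : Tendsto id (comap J (𝓝 (J μ))) (𝓝 μ) := by
      apply tendsto_of_forall_dense hgs
      intro n
      exact ((continuous_apply n).tendsto (J μ)).comp tendsto_comap
    rwa [← tendsto_id']
  exact hind.secondCountableTopology

/-- Evaluation of a continuously-varying probability measure is measurable (as a map
to measures with the Giry σ-algebra). -/
lemma measurable_toMeasure_comp {Ω W : Type*} [TopologicalSpace Ω] [MeasurableSpace Ω]
    [BorelSpace Ω] [HasOuterApproxClosed Ω]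
    [TopologicalSpace W] [MeasurableSpace W] [BorelSpace W]
    {g : W → ProbabilityMeasure Ω} (hg : Continuous g) :
    Measurable fun w => (g w : Measure Ω) := by
  apply Measure.measurable_of_measurable_coe
  have main : ∀ ⦃s : Set Ω⦄, MeasurableSet s → Measurable fun w => (g w : Measure Ω) s := by
    refine MeasurableSpace.induction_on_inter
      (BorelSpace.measurable_eq.trans borel_eq_generateFrom_isClosed) isPiSystem_isClosed
      ?_ ?_ ?_ ?_
    · simp only [measure_empty]; exact measurable_const
    · intro F (hF : IsClosed F)
      have lim : ∀ w, Tendsto (fun n => ∫⁻ x, (hF.apprSeq n x : ℝ≥0∞) ∂(g w : Measure Ω))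
          atTop (𝓝 ((g w : Measure Ω) F)) :=
        fun w => HasOuterApproxClosed.tendsto_lintegral_apprSeq hF _
      refine ENNReal.measurable_of_tendsto' atTop (fun n => ?_) (tendsto_pi_nhds.mpr lim)
      have hc : Continuous fun ν : ProbabilityMeasure Ω =>
          ∫⁻ x, (hF.apprSeq n x : ℝ≥0∞) ∂(ν : Measure Ω) := by
        rw [continuous_iff_continuousAt]
        intro ν
        exact ProbabilityMeasure.tendsto_iff_forall_lintegral_tendsto.mp
          (tendsto_id (x := 𝓝 ν)) (hF.apprSeq n)
      exact (hc.comp hg).measurable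
    · intro t ht hmeas_t
      have : ∀ w, (g w : Measure Ω) tᶜ = 1 - (g w : Measure Ω) t :=
        fun w => prob_compl_eq_one_sub ht
      simp_rw [this]
      exact measurable_const.sub hmeas_t
    · intro f hdisj hmeasf hC
      have : ∀ w, (g w : Measure Ω) (⋃ i, f i) = ∑' i, (g w : Measure Ω) (f i) :=
        fun w => measure_iUnion hdisj hmeasf
      simp_rw [this]
      exact Measurable.ennreal_tsum hC
  exact fun s hs => main hs

/-- On a dense range, the (extended) sup of norms dominates every value of a
continuous function. -/
lemma nnnorm_le_iSup_of_denseRange {S : Type*} [TopologicalSpace S] {e : ℕ → S}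
    (he : DenseRange e) {f : S → ℝ} (hf : Continuous f) (s : S) :
    (‖f s‖₊ : ℝ≥0∞) ≤ ⨆ i, (‖f (e i)‖₊ : ℝ≥0∞) := by
  have hcl : IsClosed {x : S | (‖f x‖₊ : ℝ≥0∞) ≤ ⨆ i, (‖f (e i)‖₊ : ℝ≥0∞)} :=
    isClosed_le (ENNReal.continuous_coe.comp hf.nnnorm) continuous_const
  have hsub : range e ⊆ {x : S | (‖f x‖₊ : ℝ≥0∞) ≤ ⨆ i, (‖f (e i)‖₊ : ℝ≥0∞)} := by
    rintro x ⟨i, rfl⟩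
    exact le_iSup (fun i => (‖f (e i)‖₊ : ℝ≥0∞)) i
  exact closure_minimal hsub hcl (he s)

/-- Compactness extraction: the sup over a dense sequence in a compact set of the
difference of a jointly continuous function at converging parameters tends to zero. -/
lemma tendsto_iSup_nnnorm_sub {S M : Type*} [MetricSpace S] [CompactSpace S]
    [TopologicalSpace M] (F : M × S → ℝ) (hF : Continuous F) (e : ℕ → S)
    {ν : ℕ → M} {ν₀ : M} (hν : Tendsto ν atTop (𝓝 ν₀)) :
    Tendsto (fun n => ⨆ i, (‖F (ν n, e i) - F (ν₀, e i)‖₊ : ℝ≥0∞)) atTop (𝓝 0) := by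
  rw [ENNReal.tendsto_nhds_zero]
  intro ε hε
  by_contra hcon
  have freq : ∃ᶠ n in atTop, ¬ (⨆ i, (‖F (ν n, e i) - F (ν₀, e i)‖₊ : ℝ≥0∞)) ≤ ε :=
    Filter.not_eventually.mp hcon
  obtain ⟨φ, φmono, hφ⟩ := Filter.extraction_of_frequently_atTop freq
  have hex : ∀ k, ∃ i, ε < (‖F (ν (φ k), e i) - F (ν₀, e i)‖₊ : ℝ≥0∞) :=
    fun k => lt_iSup_iff.mp (not_le.mp (hφ k))
  choose idx hidx using hex
  obtain ⟨p₀, -, σ, σmono, hσ⟩ :=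
    isCompact_univ.tendsto_subseq (x := fun k => e (idx k)) (fun k => mem_univ _)
  have hν' : Tendsto (fun j => ν (φ (σ j))) atTop (𝓝 ν₀) :=
    hν.comp ((φmono.comp σmono).tendsto_atTop)
  have h1 : Tendsto (fun j => F (ν (φ (σ j)), e (idx (σ j)))) atTop (𝓝 (F (ν₀, p₀))) :=
    (hF.tendsto _).comp (hν'.prodMk_nhds hσ)
  have h2 : Tendsto (fun j => F (ν₀, e (idx (σ j)))) atTop (𝓝 (F (ν₀, p₀))) :=
    (hF.tendsto _).comp (tendsto_const_nhds.prodMk_nhds hσ)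
  have hdiff : Tendsto (fun j => F (ν (φ (σ j)), e (idx (σ j))) - F (ν₀, e (idx (σ j))))
      atTop (𝓝 0) := by simpa using h1.sub h2
  have hnn : Tendsto (fun j => ‖F (ν (φ (σ j)), e (idx (σ j))) -
      F (ν₀, e (idx (σ j)))‖₊) atTop (𝓝 0) := by simpa using hdiff.nnnorm
  have h0 : Tendsto (fun j => (‖F (ν (φ (σ j)), e (idx (σ j))) -
      F (ν₀, e (idx (σ j)))‖₊ : ℝ≥0∞)) atTop (𝓝 (0 : ℝ≥0∞)) := by
    simpa using ENNReal.tendsto_coe.mpr hnn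
  have hsmall : ∀ᶠ j in atTop,
      (‖F (ν (φ (σ j)), e (idx (σ j))) - F (ν₀, e (idx (σ j)))‖₊ : ℝ≥0∞) < ε :=
    h0.eventually_lt_const hε
  obtain ⟨j, hj⟩ := hsmall.exists
  exact absurd (hidx (σ j)) (not_lt.mpr hj.le)

/-- A map into a separable metric space all of whose distance functions are
measurable is measurable. -/
lemma measurable_of_forall_dist {α Y : Type*} [MeasurableSpace α] [MetricSpace Y]
    [SeparableSpace Y] [MeasurableSpace Y] [BorelSpace Y] {f : α → Y}
    (h : ∀ y : Y, Measurable fun a => dist (f a) y) : Measurable f := by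
  rcases isEmpty_or_nonempty Y with hY | hY
  · haveI : IsEmpty α := ⟨fun a => hY.false (f a)⟩
    exact measurable_of_isOpen fun s _ => by
      simp [Set.eq_empty_of_isEmpty (f ⁻¹' s)]
  · apply measurable_of_isOpen
    intro U hU
    set D := denseSeq Y with hD
    have hUeq : f ⁻¹' U = ⋃ (p : ℕ × ℚ)
        (_ : 0 < (p.2 : ℝ) ∧ Metric.ball (D p.1) (p.2 : ℝ) ⊆ U),
        {a | dist (f a) (D p.1) < (p.2 : ℝ)} := by
      ext a
      simp only [mem_iUnion, mem_preimage, mem_setOf_eq]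
      constructor
      · intro ha
        obtain ⟨r, hr, hball⟩ := Metric.isOpen_iff.mp hU _ ha
        obtain ⟨n, hn⟩ := Metric.denseRange_iff.mp (denseRange_denseSeq Y) (f a) (r/4)
          (by linarith)
        obtain ⟨q, hq1, hq2⟩ := exists_rat_btwn (show dist (f a) (D n) < r/2 by
          calc dist (f a) (D n) < r/4 := hn
            _ < r/2 := by linarith)
        refine ⟨(n, q), ⟨dist_nonneg.trans_lt hq1, fun y hy => hball ?_⟩, hq1⟩
        have h1 : dist y (D n) < (q : ℝ) := hy
        have h2 : dist (D n) (f a) < r/4 := by rw [dist_comm]; exact hn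
        have : dist y (f a) < r := by
          calc dist y (f a) ≤ dist y (D n) + dist (D n) (f a) := dist_triangle _ _ _
            _ < q + r/4 := by linarith
            _ < r := by linarith
        exact this
      · rintro ⟨p, ⟨hpos, hsub⟩, hdist⟩
        exact hsub hdist
    rw [hUeq]
    exact MeasurableSet.iUnion fun p => MeasurableSet.iUnion fun _ =>
      measurableSet_lt (h _) measurable_const

end RCFAux

/-- The set `𝒱` of relaxed controls: Borel probability measures on `[0,T] × A` whose
first marginal is the normalized Lebesgue measure on `[0,T]`. -/
abbrev RelaxedControls (T : ℝ) (A : Type)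
    [TopologicalSpace A] [MeasurableSpace A] : Type :=
  {q : ProbabilityMeasure (Icc (0 : ℝ) T × A) //
    q.toMeasure.map Prod.fst =
      (ENNReal.ofReal T)⁻¹ • (Measure.comap Subtype.val (volume : Measure ℝ))}

/-- Continuity of relaxed-control functionals on `𝒫(𝒞^d × 𝒱)` (bounded case). -/
theorem relaxed_control_functional_continuous
    (d : ℕ) (T : ℝ) (hT : 0 < T)
    (A : Type) [MetricSpace A] [CompactSpace A] [MeasurableSpace A] [BorelSpace A]
    [MeasurableSpace C(Icc (0 : ℝ) T, EuclideanSpace ℝ (Fin d))]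
    [BorelSpace C(Icc (0 : ℝ) T, EuclideanSpace ℝ (Fin d))]
    [SecondCountableTopology C(Icc (0 : ℝ) T, EuclideanSpace ℝ (Fin d))]
    [MeasurableSpace (ProbabilityMeasure (EuclideanSpace ℝ (Fin d)))]
    [BorelSpace (ProbabilityMeasure (EuclideanSpace ℝ (Fin d)))]
    [MeasurableSpace (RelaxedControls T A)]
    [BorelSpace (RelaxedControls T A)]
    (ψ : Icc (0 : ℝ) T → EuclideanSpace ℝ (Fin d) →
      ProbabilityMeasure (EuclideanSpace ℝ (Fin d)) → A → ℝ)
    -- ψ bounded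
    (hbdd : ∃ C : ℝ, ∀ t x m a, |ψ t x m a| ≤ C)
    -- ψ jointly Borel measurable
    (hmeas : Measurable fun q : Icc (0 : ℝ) T × EuclideanSpace ℝ (Fin d) ×
        ProbabilityMeasure (EuclideanSpace ℝ (Fin d)) × A =>
      ψ q.1 q.2.1 q.2.2.1 q.2.2.2)
    -- for each t, ψ(t, ·, ·, ·) is continuous
    (hcont : ∀ t : Icc (0 : ℝ) T, Continuous fun q : EuclideanSpace ℝ (Fin d) ×
        ProbabilityMeasure (EuclideanSpace ℝ (Fin d)) × A =>
      ψ t q.1 q.2.1 q.2.2) :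
    Continuous fun m : ProbabilityMeasure
        (C(Icc (0 : ℝ) T, EuclideanSpace ℝ (Fin d)) × RelaxedControls T A) =>
      ∫ xq : C(Icc (0 : ℝ) T, EuclideanSpace ℝ (Fin d)) × RelaxedControls T A,
        (∫ ta : Icc (0 : ℝ) T × A,
          ψ ta.1 (xq.1 ta.1)
            (m.map (f := fun p => p.1 ta.1)
              (((continuous_eval_const ta.1).comp continuous_fst).measurable.aemeasurable))
            ta.2 ∂(xq.2.1.toMeasure))
        ∂(m.toMeasure) := by
  classical
  obtain ⟨C0, hC0⟩ := hbdd
  set Cb : ℝ := max C0 0 with hCb_def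
  have hCb0 : 0 ≤ Cb := le_max_right _ _
  have hψb : ∀ t x ν a, |ψ t x ν a| ≤ Cb := fun t x ν a => (hC0 t x ν a).trans (le_max_left _ _)
  rcases isEmpty_or_nonempty A with hA | hA
  · -- `A` empty: the domain is empty, continuity is trivial.
    haveI : IsEmpty (ProbabilityMeasure (Icc (0:ℝ) T × A)) := by
      refine ⟨fun μ => ?_⟩
      have h1 : (μ : Measure (Icc (0:ℝ) T × A)) univ = 1 := measure_univ
      rw [Set.univ_eq_empty_iff.mpr inferInstance, measure_empty] at h1
      exact zero_ne_one h1
    haveI : IsEmpty (ProbabilityMeasure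
        (C(Icc (0 : ℝ) T, EuclideanSpace ℝ (Fin d)) × RelaxedControls T A)) := by
      refine ⟨fun μ => ?_⟩
      have h1 : (μ : Measure (C(Icc (0 : ℝ) T, EuclideanSpace ℝ (Fin d)) ×
        RelaxedControls T A)) univ = 1 := measure_univ
      rw [Set.univ_eq_empty_iff.mpr inferInstance, measure_empty] at h1
      exact zero_ne_one h1
    rw [continuous_iff_continuousAt]
    intro m
    exact (IsEmpty.false m).elim
  -- Main case : `A` nonempty.
  haveI : Nonempty (Icc (0:ℝ) T) := (Set.nonempty_Icc.2 hT.le).to_subtype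
  haveI : SecondCountableTopology (ProbabilityMeasure (Icc (0:ℝ) T × A)) :=
    RCFAux.secondCountable_probabilityMeasure _
  haveI : SecondCountableTopology (RelaxedControls T A) :=
    Topology.IsEmbedding.subtypeVal.isInducing.secondCountableTopology
  haveI : TopologicalSpace.PseudoMetrizableSpace (RelaxedControls T A) :=
    Topology.IsEmbedding.subtypeVal.isInducing.pseudoMetrizableSpace
  -- Evaluation maps.
  have hev : ∀ t : Icc (0:ℝ) T, Continuous fun p :
      C(Icc (0 : ℝ) T, EuclideanSpace ℝ (Fin d)) × RelaxedControls T A => p.1 t :=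
    fun t => (continuous_eval_const t).comp continuous_fst
  let μc : ProbabilityMeasure (C(Icc (0 : ℝ) T, EuclideanSpace ℝ (Fin d)) ×
      RelaxedControls T A) → Icc (0:ℝ) T → ProbabilityMeasure (EuclideanSpace ℝ (Fin d)) :=
    fun m t => m.map (f := fun p => p.1 t) ((hev t).measurable.aemeasurable)
  -- continuity of the measure flow in `t` (for fixed `m`)
  have hμc_t : ∀ m, Continuous fun t => μc m t := by
    intro m
    apply SeqContinuous.continuous
    intro ts t hts
    rw [ProbabilityMeasure.tendsto_iff_forall_integral_tendsto]
    intro f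
    have key : ∀ s : Icc (0:ℝ) T, ∫ ω, f ω ∂((μc m s) : Measure (EuclideanSpace ℝ (Fin d)))
        = ∫ xq, f (xq.1 s) ∂(m : Measure (C(Icc (0 : ℝ) T,
          EuclideanSpace ℝ (Fin d)) × RelaxedControls T A)) := by
      intro s
      show ∫ ω, f ω ∂((m.map ((hev s).measurable.aemeasurable)) :
        Measure (EuclideanSpace ℝ (Fin d))) = _
      rw [ProbabilityMeasure.toMeasure_map]
      exact integral_map ((hev s).measurable.aemeasurable) f.continuous.aestronglyMeasurable
    simp only [Function.comp_def]
    simp_rw [key]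
    apply tendsto_integral_of_dominated_convergence (fun _ => ‖f‖)
    · intro n; exact (f.continuous.comp (hev (ts n))).aestronglyMeasurable
    · exact integrable_const _
    · intro n; exact Filter.Eventually.of_forall fun xq => f.norm_coe_le_norm _
    · exact Filter.Eventually.of_forall fun xq =>
        (f.continuous.tendsto _).comp ((xq.1.continuous.tendsto t).comp hts)
  -- continuity of the measure flow in `m` (for fixed `t`)
  have hμc_m : ∀ t, Continuous fun m => μc m t :=
    fun t => ProbabilityMeasure.continuous_map (hev t)
  -- the kernel sending a pair to its control measure
  have hκmeas : Measurable fun xq : C(Icc (0 : ℝ) T, EuclideanSpace ℝ (Fin d)) ×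
      RelaxedControls T A => (xq.2.1.toMeasure) :=
    RCFAux.measurable_toMeasure_comp (Ω := Icc (0:ℝ) T × A)
      (continuous_subtype_val.comp continuous_snd)
  let κ : ProbabilityTheory.Kernel (C(Icc (0 : ℝ) T, EuclideanSpace ℝ (Fin d)) ×
      RelaxedControls T A) (Icc (0:ℝ) T × A) := ⟨fun xq => xq.2.1.toMeasure, hκmeas⟩
  haveI : ProbabilityTheory.IsMarkovKernel κ :=
    ⟨fun xq => by show IsProbabilityMeasure (xq.2.1.toMeasure); infer_instance⟩
  -- the integrand functional
  let G : ProbabilityMeasure (C(Icc (0 : ℝ) T, EuclideanSpace ℝ (Fin d)) ×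
      RelaxedControls T A) → (C(Icc (0 : ℝ) T, EuclideanSpace ℝ (Fin d)) ×
      RelaxedControls T A) → ℝ :=
    fun m xq => ∫ ta : Icc (0:ℝ) T × A, ψ ta.1 (xq.1 ta.1) (μc m ta.1) ta.2 ∂(xq.2.1.toMeasure)
  show Continuous fun m => ∫ xq, G m xq ∂(m.toMeasure)
  have hinteg_meas : ∀ m, Measurable fun p : ((C(Icc (0 : ℝ) T, EuclideanSpace ℝ (Fin d)) ×
      RelaxedControls T A) × (Icc (0:ℝ) T × A)) =>
      ψ p.2.1 (p.1.1 p.2.1) (μc m p.2.1) p.2.2 := by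
    intro m
    have h1 : Measurable fun p : ((C(Icc (0 : ℝ) T, EuclideanSpace ℝ (Fin d)) ×
        RelaxedControls T A) × (Icc (0:ℝ) T × A)) => p.2.1 :=
      measurable_fst.comp measurable_snd
    have h2 : Continuous fun p : ((C(Icc (0 : ℝ) T, EuclideanSpace ℝ (Fin d)) ×
        RelaxedControls T A) × (Icc (0:ℝ) T × A)) => p.1.1 p.2.1 :=
      ContinuousEval.continuous_eval.comp ((continuous_fst.comp continuous_fst).prodMk
        (continuous_fst.comp continuous_snd))
    have h3 : Measurable fun p : ((C(Icc (0 : ℝ) T, EuclideanSpace ℝ (Fin d)) ×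
        RelaxedControls T A) × (Icc (0:ℝ) T × A)) => μc m p.2.1 :=
      ((hμc_t m).measurable).comp h1
    exact hmeas.comp (h1.prodMk (h2.measurable.prodMk
      (h3.prodMk (measurable_snd.comp measurable_snd))))
  have hGmeas : ∀ m, Measurable (G m) := fun m =>
    ((hinteg_meas m).stronglyMeasurable.integral_kernel_prod_right' (κ := κ)).measurable
  have hGb : ∀ m xq, |G m xq| ≤ Cb := by
    intro m xq
    have h := norm_integral_le_of_norm_le_const (μ := xq.2.1.toMeasure) (C := Cb)
      (f := fun ta : Icc (0:ℝ) T × A => ψ ta.1 (xq.1 ta.1) (μc m ta.1) ta.2)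
      (Filter.Eventually.of_forall fun ta => by rw [Real.norm_eq_abs]; exact hψb _ _ _ _)
    simpa [Real.norm_eq_abs, measure_univ] using h
  have hGint : ∀ (m m' : ProbabilityMeasure (C(Icc (0 : ℝ) T,
      EuclideanSpace ℝ (Fin d)) × RelaxedControls T A)),
      Integrable (G m) (m'.toMeasure) := by
    intro m m'
    refine ⟨(hGmeas m).aestronglyMeasurable, HasFiniteIntegral.of_bounded (C := Cb) ?_⟩
    exact Filter.Eventually.of_forall fun xq => by rw [Real.norm_eq_abs]; exact hGb m xq
  -- Reduce continuity to sequential continuity.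
  apply SeqContinuous.continuous
  intro ms m₀ hms
  have key : Filter.Tendsto (fun n => ∫ xq, G (ms n) xq ∂((ms n).toMeasure)) Filter.atTop
      (nhds (∫ xq, G m₀ xq ∂(m₀.toMeasure))) := by
    rw [Metric.tendsto_nhds]
    intro ε hε
    set εB : ℝ := ε/(8*(3*Cb+1)) with hεB_def
    have hεBpos : 0 < εB := by
      rw [hεB_def]
      apply div_pos hε
      nlinarith [hCb0]
    have h2CbεB : 2*Cb*εB ≤ ε/8 := by
      have h1 : (3*Cb+1) * εB = ε/8 := by
        rw [hεB_def]; field_simp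
      nlinarith
    -- choose the radius R
    obtain ⟨R, hRBad, hR1⟩ : ∃ R : ℕ, (m₀.toMeasure)
        {xq : C(Icc (0 : ℝ) T, EuclideanSpace ℝ (Fin d)) × RelaxedControls T A |
          (R:ℝ) ≤ ‖xq.1‖} < ENNReal.ofReal εB ∧ 1 ≤ R := by
      set sfam : ℕ → Set (C(Icc (0 : ℝ) T, EuclideanSpace ℝ (Fin d)) ×
          RelaxedControls T A) := fun R => {xq | (R:ℝ) ≤ ‖xq.1‖} with hsfam
      have hIA : (⋂ R : ℕ, sfam R) = ∅ := by
        ext xq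
        simp only [hsfam, mem_iInter, mem_setOf_eq, mem_empty_iff_false, iff_false,
          not_forall, not_le]
        exact exists_nat_gt ‖xq.1‖
      have hmono : Antitone sfam := by
        intro R R' h xq hxq
        have hxq' : (R' : ℝ) ≤ ‖xq.1‖ := hxq
        show (R : ℝ) ≤ ‖xq.1‖
        exact le_trans (Nat.cast_le.mpr h : (R : ℝ) ≤ (R' : ℝ)) hxq'
      have htd := tendsto_measure_iInter_atTop (μ := m₀.toMeasure) (s := sfam)
        (fun R => ((isClosed_le continuous_const
          (continuous_norm.comp continuous_fst)).measurableSet).nullMeasurableSet)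
        hmono ⟨0, measure_ne_top _ _⟩
      rw [hIA, measure_empty] at htd
      have hev2 := htd.eventually_lt_const (ENNReal.ofReal_pos.2 hεBpos)
      obtain ⟨R, h1, h2⟩ := (hev2.and (Filter.eventually_ge_atTop 1)).exists
      exact ⟨R, h1, h2⟩
    set Bad : Set (C(Icc (0 : ℝ) T, EuclideanSpace ℝ (Fin d)) × RelaxedControls T A) :=
      {xq | (R:ℝ) ≤ ‖xq.1‖} with hBad_def
    have hBadClosed : IsClosed Bad :=
      isClosed_le continuous_const (continuous_norm.comp continuous_fst)
    have hBadMeas : MeasurableSet Bad := hBadClosed.measurableSet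
    have hRpos : (0:ℝ) < R := by exact_mod_cast hR1.trans_lt' zero_lt_one
    -- the compact ball
    set B : Set (EuclideanSpace ℝ (Fin d)) := Metric.closedBall 0 R with hB_def
    haveI : Nonempty B := Set.Nonempty.to_subtype ⟨0, Metric.mem_closedBall_self hRpos.le⟩
    haveI : CompactSpace B := isCompact_iff_compactSpace.mp (isCompact_closedBall _ _)
    set e : ℕ → (B × A) := TopologicalSpace.denseSeq (B × A) with he_def
    have he : DenseRange e := TopologicalSpace.denseRange_denseSeq _
    -- sup over the ball of the difference of ψ at the two measure flows
    set H : ℕ → Icc (0:ℝ) T → ℝ≥0∞ := fun n t => ⨆ i,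
      (‖ψ t ((e i).1 : EuclideanSpace ℝ (Fin d)) (μc (ms n) t) (e i).2 -
        ψ t ((e i).1 : EuclideanSpace ℝ (Fin d)) (μc m₀ t) (e i).2‖₊ : ℝ≥0∞) with hH_def
    have hψmeas_t : ∀ (m : ProbabilityMeasure (C(Icc (0 : ℝ) T,
        EuclideanSpace ℝ (Fin d)) × RelaxedControls T A)) (y : EuclideanSpace ℝ (Fin d))
        (a : A), Measurable fun t => ψ t y (μc m t) a := by
      intro m y a
      exact hmeas.comp (measurable_id.prodMk (measurable_const.prodMk
        (((hμc_t m).measurable).prodMk measurable_const)))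
    have hHmeas : ∀ n, Measurable (H n) := by
      intro n
      refine Measurable.iSup fun i => Measurable.coe_nnreal_ennreal (Measurable.nnnorm ?_)
      exact (hψmeas_t (ms n) _ _).sub (hψmeas_t m₀ _ _)
    have hHbdd : ∀ n t, H n t ≤ ENNReal.ofReal (2*Cb) := by
      intro n t
      refine iSup_le fun i => ?_
      rw [← enorm_eq_nnnorm, ← ofReal_norm]
      refine ENNReal.ofReal_le_ofReal ?_
      rw [Real.norm_eq_abs]
      calc |ψ t ((e i).1 : EuclideanSpace ℝ (Fin d)) (μc (ms n) t) (e i).2 -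
            ψ t ((e i).1 : EuclideanSpace ℝ (Fin d)) (μc m₀ t) (e i).2|
          ≤ |ψ t ((e i).1 : EuclideanSpace ℝ (Fin d)) (μc (ms n) t) (e i).2| +
            |ψ t ((e i).1 : EuclideanSpace ℝ (Fin d)) (μc m₀ t) (e i).2| := abs_sub _ _
        _ ≤ Cb + Cb := add_le_add (hψb _ _ _ _) (hψb _ _ _ _)
        _ = 2*Cb := by ring
    have hHne : ∀ n t, H n t ≠ ⊤ := fun n t => ((hHbdd n t).trans_lt ENNReal.ofReal_lt_top).ne
    have hHtend : ∀ t, Filter.Tendsto (fun n => H n t) Filter.atTop (nhds 0) := by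
      intro t
      have hν : Filter.Tendsto (fun n => μc (ms n) t) Filter.atTop (nhds (μc m₀ t)) :=
        ((hμc_m t).tendsto m₀).comp hms
      have hF : Continuous fun p : ProbabilityMeasure (EuclideanSpace ℝ (Fin d)) × (B × A) =>
          ψ t (p.2.1 : EuclideanSpace ℝ (Fin d)) p.1 p.2.2 :=
        (hcont t).comp ((continuous_subtype_val.comp (continuous_fst.comp
          continuous_snd)).prodMk (continuous_fst.prodMk (continuous_snd.comp continuous_snd)))
      exact RCFAux.tendsto_iSup_nnnorm_sub _ hF e hν
    have hDom : ∀ (n : ℕ) (t : Icc (0:ℝ) T) (y : EuclideanSpace ℝ (Fin d)), y ∈ B → ∀ a : A,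
        (‖ψ t y (μc (ms n) t) a - ψ t y (μc m₀ t) a‖₊ : ℝ≥0∞) ≤ H n t := by
      intro n t y hy a
      have hf : Continuous fun p : B × A => ψ t ((p.1 : EuclideanSpace ℝ (Fin d)))
          (μc (ms n) t) p.2 - ψ t ((p.1 : EuclideanSpace ℝ (Fin d))) (μc m₀ t) p.2 := by
        have hc1 : Continuous fun p : B × A => ψ t ((p.1 : EuclideanSpace ℝ (Fin d)))
            (μc (ms n) t) p.2 :=
          (hcont t).comp ((continuous_subtype_val.comp continuous_fst).prodMk
            (continuous_const.prodMk continuous_snd))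
        have hc2 : Continuous fun p : B × A => ψ t ((p.1 : EuclideanSpace ℝ (Fin d)))
            (μc m₀ t) p.2 :=
          (hcont t).comp ((continuous_subtype_val.comp continuous_fst).prodMk
            (continuous_const.prodMk continuous_snd))
        exact hc1.sub hc2
      exact RCFAux.nnnorm_le_iSup_of_denseRange he hf (⟨y, hy⟩, a)
    -- the normalized Lebesgue measure
    set lamT : Measure (Icc (0:ℝ) T) :=
      (ENNReal.ofReal T)⁻¹ • (Measure.comap Subtype.val (volume : Measure ℝ)) with hlamT_def
    haveI hlamTprob : IsProbabilityMeasure lamT := by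
      constructor
      have hcomap : (Measure.comap (Subtype.val) (volume : Measure ℝ))
          (univ : Set (Icc (0:ℝ) T)) = ENNReal.ofReal T := by
        rw [(MeasurableEmbedding.subtype_coe measurableSet_Icc).comap_apply]
        rw [image_univ, Subtype.range_coe, Real.volume_Icc, sub_zero]
      rw [hlamT_def, Measure.smul_apply, hcomap, smul_eq_mul]
      exact ENNReal.inv_mul_cancel (ENNReal.ofReal_pos.2 hT).ne' ENNReal.ofReal_ne_top
    have hmarg : ∀ (q : RelaxedControls T A) (f : Icc (0:ℝ) T → ℝ),
        AEStronglyMeasurable f lamT →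
        ∫ ta : Icc (0:ℝ) T × A, f ta.1 ∂(q.1.toMeasure) = ∫ t, f t ∂lamT := by
      intro q f hf
      have h1 : (q.1.toMeasure).map Prod.fst = lamT := by rw [hlamT_def]; exact q.2
      calc ∫ ta : Icc (0:ℝ) T × A, f ta.1 ∂(q.1.toMeasure)
          = ∫ t, f t ∂((q.1.toMeasure).map Prod.fst) :=
            (integral_map measurable_fst.aemeasurable (by rwa [h1])).symm
        _ = ∫ t, f t ∂lamT := by rw [h1]
    set u : ℕ → ℝ := fun n => ∫ t, (H n t).toReal ∂lamT with hu_def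
    have hu0 : ∀ n, 0 ≤ u n := fun n => integral_nonneg (fun t => ENNReal.toReal_nonneg)
    have hutend : Filter.Tendsto u Filter.atTop (nhds 0) := by
      have h0 : Filter.Tendsto (fun n : ℕ => ∫ t, (H n t).toReal ∂lamT) Filter.atTop
          (nhds (∫ (_ : Icc (0:ℝ) T), (0:ℝ) ∂lamT)) := by
        apply tendsto_integral_of_dominated_convergence (fun _ => 2*Cb)
        · intro n; exact ((hHmeas n).ennreal_toReal).aestronglyMeasurable
        · exact integrable_const _
        · intro n
          refine Filter.Eventually.of_forall fun t => ?_
          rw [Real.norm_eq_abs, abs_of_nonneg ENNReal.toReal_nonneg]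
          exact ENNReal.toReal_le_of_le_ofReal (by linarith) (hHbdd n t)
        · refine Filter.Eventually.of_forall fun t => ?_
          simpa [Function.comp_def] using (ENNReal.tendsto_toReal (by simp)).comp (hHtend t)
      simpa using h0
    -- pointwise bound for the first term
    have hGood1 : ∀ n xq, xq ∉ Bad → |G (ms n) xq - G m₀ xq| ≤ u n := by
      intro n xq hxq
      have hxnorm : ‖xq.1‖ < R := not_le.mp hxq
      have hmem : ∀ s : Icc (0:ℝ) T, xq.1 s ∈ B := fun s => by
        rw [hB_def, Metric.mem_closedBall, dist_zero_right]
        exact (xq.1.norm_coe_le_norm s).trans hxnorm.le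
      have hm1 : ∀ (m : ProbabilityMeasure (C(Icc (0 : ℝ) T,
          EuclideanSpace ℝ (Fin d)) × RelaxedControls T A)),
          Measurable fun ta : Icc (0:ℝ) T × A => ψ ta.1 (xq.1 ta.1) (μc m ta.1) ta.2 :=
        fun m => (hinteg_meas m).comp (measurable_const.prodMk measurable_id)
      have hint : ∀ (m : ProbabilityMeasure (C(Icc (0 : ℝ) T,
          EuclideanSpace ℝ (Fin d)) × RelaxedControls T A)),
          Integrable (fun ta : Icc (0:ℝ) T × A => ψ ta.1 (xq.1 ta.1) (μc m ta.1) ta.2)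
            xq.2.1.toMeasure := by
        intro m
        refine ⟨(hm1 m).aestronglyMeasurable, HasFiniteIntegral.of_bounded (C := Cb) ?_⟩
        exact Filter.Eventually.of_forall fun ta => by rw [Real.norm_eq_abs]; exact hψb _ _ _ _
      have hint_bound : Integrable (fun ta : Icc (0:ℝ) T × A => (H n ta.1).toReal)
          xq.2.1.toMeasure := by
        refine ⟨((hHmeas n).ennreal_toReal.comp measurable_fst).aestronglyMeasurable,
          HasFiniteIntegral.of_bounded (C := 2*Cb) ?_⟩
        refine Filter.Eventually.of_forall fun ta => ?_
        rw [Real.norm_eq_abs, abs_of_nonneg ENNReal.toReal_nonneg]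
        exact ENNReal.toReal_le_of_le_ofReal (by linarith) (hHbdd n ta.1)
      have hmono : ∀ ta : Icc (0:ℝ) T × A,
          |ψ ta.1 (xq.1 ta.1) (μc (ms n) ta.1) ta.2 -
            ψ ta.1 (xq.1 ta.1) (μc m₀ ta.1) ta.2| ≤ (H n ta.1).toReal := by
        intro ta
        have h1 := hDom n ta.1 (xq.1 ta.1) (hmem ta.1) ta.2
        calc |ψ ta.1 (xq.1 ta.1) (μc (ms n) ta.1) ta.2 -
              ψ ta.1 (xq.1 ta.1) (μc m₀ ta.1) ta.2|
            = ((‖ψ ta.1 (xq.1 ta.1) (μc (ms n) ta.1) ta.2 -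
              ψ ta.1 (xq.1 ta.1) (μc m₀ ta.1) ta.2‖₊ : ℝ≥0∞)).toReal := by
              simp [Real.norm_eq_abs]
          _ ≤ (H n ta.1).toReal := ENNReal.toReal_mono (hHne n ta.1) h1
      show |(∫ ta : Icc (0:ℝ) T × A, ψ ta.1 (xq.1 ta.1) (μc (ms n) ta.1) ta.2
          ∂(xq.2.1.toMeasure)) - (∫ ta : Icc (0:ℝ) T × A,
          ψ ta.1 (xq.1 ta.1) (μc m₀ ta.1) ta.2 ∂(xq.2.1.toMeasure))| ≤ u n
      rw [← integral_sub (hint (ms n)) (hint m₀)]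
      calc |∫ ta : Icc (0:ℝ) T × A, (ψ ta.1 (xq.1 ta.1) (μc (ms n) ta.1) ta.2 -
            ψ ta.1 (xq.1 ta.1) (μc m₀ ta.1) ta.2) ∂(xq.2.1.toMeasure)|
          ≤ ∫ ta : Icc (0:ℝ) T × A, |ψ ta.1 (xq.1 ta.1) (μc (ms n) ta.1) ta.2 -
            ψ ta.1 (xq.1 ta.1) (μc m₀ ta.1) ta.2| ∂(xq.2.1.toMeasure) := by
            simpa [Real.norm_eq_abs] using norm_integral_le_integral_norm
              (μ := xq.2.1.toMeasure) (f := fun ta : Icc (0:ℝ) T × A =>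
              ψ ta.1 (xq.1 ta.1) (μc (ms n) ta.1) ta.2 -
              ψ ta.1 (xq.1 ta.1) (μc m₀ ta.1) ta.2)
        _ ≤ ∫ ta : Icc (0:ℝ) T × A, (H n ta.1).toReal ∂(xq.2.1.toMeasure) :=
            integral_mono ((hint (ms n)).sub (hint m₀)).abs hint_bound hmono
        _ = u n := hmarg xq.2 _ ((hHmeas n).ennreal_toReal.aestronglyMeasurable)
    have hPt1 : ∀ n xq, |G (ms n) xq - G m₀ xq| ≤ u n +
        Bad.indicator (fun _ => 2*Cb) xq := by
      intro n xq
      by_cases hxq : xq ∈ Bad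
      · rw [indicator_of_mem hxq]
        have h1 : |G (ms n) xq - G m₀ xq| ≤ 2*Cb := by
          calc |G (ms n) xq - G m₀ xq| ≤ |G (ms n) xq| + |G m₀ xq| := abs_sub _ _
            _ ≤ Cb + Cb := add_le_add (hGb _ _) (hGb _ _)
            _ = 2*Cb := by ring
        linarith [hu0 n]
      · rw [indicator_of_notMem hxq, add_zero]
        exact hGood1 n xq hxq
    -- the function Θ : t ↦ ψ(t, ·, μ₀(t), ·) as a continuous-function-valued map
    borelize C((B × A : Type), ℝ)
    let Θ : Icc (0:ℝ) T → C((B × A : Type), ℝ) := fun t =>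
      ⟨fun p => ψ t ((p.1 : EuclideanSpace ℝ (Fin d))) (μc m₀ t) p.2,
        (hcont t).comp ((continuous_subtype_val.comp continuous_fst).prodMk
          (continuous_const.prodMk continuous_snd))⟩
    have hΘapply : ∀ t p, Θ t p = ψ t ((p.1 : EuclideanSpace ℝ (Fin d))) (μc m₀ t) p.2 :=
      fun t p => rfl
    have hΘb : ∀ t, ‖Θ t‖ ≤ Cb := by
      intro t
      refine (ContinuousMap.norm_le _ hCb0).mpr fun p => ?_
      rw [Real.norm_eq_abs]
      exact hψb _ _ _ _
    have hΘmeas : Measurable Θ := by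
      apply RCFAux.measurable_of_forall_dist
      intro y
      have hkey : ∀ t, dist (Θ t) y =
          (⨆ i, (nndist (Θ t (e i)) (y (e i)) : ℝ≥0∞)).toReal := by
        intro t
        have hle : ∀ i, ((nndist (Θ t (e i)) (y (e i)) : ℝ≥0∞)) ≤
            ENNReal.ofReal (dist (Θ t) y) := by
          intro i
          rw [← edist_nndist, edist_dist]
          exact ENNReal.ofReal_le_ofReal (ContinuousMap.dist_apply_le_dist _)
        have hfin : (⨆ i, (nndist (Θ t (e i)) (y (e i)) : ℝ≥0∞)) ≠ ⊤ :=
          ((iSup_le hle).trans_lt ENNReal.ofReal_lt_top).ne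
        refine le_antisymm ?_ ?_
        · refine (ContinuousMap.dist_le ENNReal.toReal_nonneg).mpr fun p => ?_
          have hcl : IsClosed {p : B × A | dist (Θ t p) (y p) ≤
              (⨆ i, (nndist (Θ t (e i)) (y (e i)) : ℝ≥0∞)).toReal} :=
            isClosed_le (Continuous.dist (Θ t).continuous y.continuous) continuous_const
          have hsub : range e ⊆ {p : B × A | dist (Θ t p) (y p) ≤
              (⨆ i, (nndist (Θ t (e i)) (y (e i)) : ℝ≥0∞)).toReal} := by
            rintro p ⟨i, rfl⟩
            show dist (Θ t (e i)) (y (e i)) ≤ _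
            have h1 : dist (Θ t (e i)) (y (e i)) =
                ((nndist (Θ t (e i)) (y (e i)) : ℝ≥0∞)).toReal := by
              rw [← edist_nndist, edist_dist, ENNReal.toReal_ofReal dist_nonneg]
            rw [h1]
            exact ENNReal.toReal_mono hfin
              (le_iSup (fun i => (nndist (Θ t (e i)) (y (e i)) : ℝ≥0∞)) i)
          exact closure_minimal hsub hcl (he p)
        · refine ENNReal.toReal_le_of_le_ofReal dist_nonneg (iSup_le hle)
      simp_rw [hkey]
      refine Measurable.ennreal_toReal (Measurable.iSup fun i => ?_)
      have h1 : Measurable fun t => Θ t (e i) := by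
        simp_rw [hΘapply]
        exact hψmeas_t m₀ _ _
      exact Measurable.coe_nnreal_ennreal (h1.nndist measurable_const)
    have hΘint : Integrable Θ lamT := by
      refine ⟨hΘmeas.aestronglyMeasurable, HasFiniteIntegral.of_bounded (C := Cb) ?_⟩
      exact Filter.Eventually.of_forall hΘb
    obtain ⟨gb, hgb_err, -⟩ :=
      hΘint.exists_boundedContinuous_integral_sub_le (show (0:ℝ) < ε/8 by linarith)
    -- clamp the approximation to be bounded by Cb
    have hclamp : ∀ u v : ℝ, |u| ≤ Cb → |u - max (-Cb) (min Cb v)| ≤ |u - v| := by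
      intro u v hu
      obtain ⟨hu1, hu2⟩ := abs_le.mp hu
      rcases le_total v (-Cb) with h | h
      · rw [min_eq_right (by linarith), max_eq_left h]
        have h1 := le_abs_self (u - v)
        have h2 := neg_abs_le (u - v)
        rw [abs_le]; constructor <;> linarith
      · rcases le_total v Cb with h' | h'
        · rw [min_eq_right h', max_eq_right h]
        · rw [min_eq_left h', max_eq_right (by linarith)]
          have h1 := le_abs_self (u - v)
          have h2 := neg_abs_le (u - v)
          rw [abs_le]; constructor <;> linarith
    let clampCM : C(ℝ, ℝ) := ⟨fun v => max (-Cb) (min Cb v),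
      continuous_const.max (continuous_const.min continuous_id)⟩
    let gc : Icc (0:ℝ) T → C((B × A : Type), ℝ) := fun t => clampCM.comp (gb t)
    have hgc_cont : Continuous gc :=
      (ContinuousMap.continuous_postcomp clampCM).comp gb.continuous
    have hgc_apply : ∀ t p, gc t p = max (-Cb) (min Cb (gb t p)) := fun t p => rfl
    have hgc_b : ∀ t p, |gc t p| ≤ Cb := by
      intro t p
      rw [hgc_apply, abs_le]
      constructor
      · exact le_max_left _ _
      · exact max_le (by linarith) (min_le_left _ _)
    have hgc_err : ∀ t, ‖Θ t - gc t‖ ≤ ‖Θ t - gb t‖ := by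
      intro t
      refine (ContinuousMap.norm_le _ (norm_nonneg _)).mpr fun p => ?_
      rw [ContinuousMap.sub_apply, Real.norm_eq_abs, hgc_apply]
      refine (hclamp (Θ t p) (gb t p) (by
        rw [← Real.norm_eq_abs]
        exact (ContinuousMap.norm_coe_le_norm (Θ t) p).trans (hΘb t))).trans ?_
      rw [← Real.norm_eq_abs]
      have h1 : Θ t p - gb t p = (Θ t - gb t) p := by simp [ContinuousMap.sub_apply]
      rw [h1]
      exact (Θ t - gb t).norm_coe_le_norm p
    -- the retraction onto the closed ball
    have hmaxpos : ∀ y : EuclideanSpace ℝ (Fin d), (0:ℝ) < max (R:ℝ) ‖y‖ :=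
      fun y => lt_of_lt_of_le hRpos (le_max_left _ _)
    have hPimem : ∀ y : EuclideanSpace ℝ (Fin d), ((R:ℝ) / max (R:ℝ) ‖y‖) • y ∈ B := by
      intro y
      rw [hB_def, Metric.mem_closedBall, dist_zero_right, norm_smul, Real.norm_eq_abs,
        abs_of_nonneg (div_nonneg hRpos.le (hmaxpos y).le), div_mul_eq_mul_div,
        div_le_iff₀ (hmaxpos y)]
      have := le_max_right (R:ℝ) ‖y‖
      nlinarith [norm_nonneg y]
    let Pi' : EuclideanSpace ℝ (Fin d) → B := fun y => ⟨_, hPimem y⟩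
    have hPicont : Continuous Pi' := by
      refine Continuous.subtype_mk ?_ _
      exact ((continuous_const.div (continuous_const.max continuous_norm)
        (fun y => (hmaxpos y).ne')).smul continuous_id)
    have hPiid : ∀ y : EuclideanSpace ℝ (Fin d), ‖y‖ ≤ R →
        ((Pi' y : EuclideanSpace ℝ (Fin d))) = y := by
      intro y hy
      show ((R:ℝ) / max (R:ℝ) ‖y‖) • y = y
      rw [max_eq_left hy, div_self hRpos.ne', one_smul]
    -- the approximating functional
    let FF : (C(Icc (0 : ℝ) T, EuclideanSpace ℝ (Fin d)) × RelaxedControls T A) → ℝ :=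
      fun xq => ∫ ta : Icc (0:ℝ) T × A, gc ta.1 (Pi' (xq.1 ta.1), ta.2) ∂(xq.2.1.toMeasure)
    have hFFb : ∀ xq, |FF xq| ≤ Cb := by
      intro xq
      have h := norm_integral_le_of_norm_le_const (μ := xq.2.1.toMeasure) (C := Cb)
        (f := fun ta : Icc (0:ℝ) T × A => gc ta.1 (Pi' (xq.1 ta.1), ta.2))
        (Filter.Eventually.of_forall fun ta => by rw [Real.norm_eq_abs]; exact hgc_b _ _)
      simpa [Real.norm_eq_abs, measure_univ] using h
    -- continuity of FF
    have hgcj : Continuous fun w : Icc (0:ℝ) T × (B × A) => gc w.1 w.2 :=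
      ContinuousEval.continuous_eval.comp ((hgc_cont.comp continuous_fst).prodMk
        continuous_snd)
    have hF2 : Continuous fun p : C(Icc (0 : ℝ) T, EuclideanSpace ℝ (Fin d)) ×
        (Icc (0:ℝ) T × A) => gc p.2.1 (Pi' (p.1 p.2.1), p.2.2) := by
      have hpre : Continuous fun p : C(Icc (0 : ℝ) T, EuclideanSpace ℝ (Fin d)) ×
          (Icc (0:ℝ) T × A) => ((p.2.1, (Pi' (p.1 p.2.1), p.2.2)) :
            Icc (0:ℝ) T × (B × A)) := by
        refine (continuous_fst.comp continuous_snd).prodMk ?_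
        refine Continuous.prodMk ?_ (continuous_snd.comp continuous_snd)
        exact hPicont.comp (ContinuousEval.continuous_eval.comp
          (continuous_fst.prodMk (continuous_fst.comp continuous_snd)))
      exact Continuous.comp
        (g := fun w : Icc (0:ℝ) T × (B × A) => gc w.1 w.2)
        (f := fun p : C(Icc (0 : ℝ) T, EuclideanSpace ℝ (Fin d)) × (Icc (0:ℝ) T × A) =>
          (p.2.1, (Pi' (p.1 p.2.1), p.2.2))) hgcj hpre
    have hFFcont : Continuous FF := by
      apply SeqContinuous.continuous
      intro zs z₀ hzs
      set F2 : C(Icc (0 : ℝ) T, EuclideanSpace ℝ (Fin d)) × (Icc (0:ℝ) T × A) → ℝ :=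
        fun p => gc p.2.1 (Pi' (p.1 p.2.1), p.2.2) with hF2_def
      set e2 : ℕ → Icc (0:ℝ) T × A := TopologicalSpace.denseSeq (Icc (0:ℝ) T × A) with he2_def
      have he2 : DenseRange e2 := TopologicalSpace.denseRange_denseSeq _
      have hx : Filter.Tendsto (fun j => (zs j).1) Filter.atTop (nhds z₀.1) :=
        (continuous_fst.tendsto z₀).comp hzs
      have hsup := RCFAux.tendsto_iSup_nnnorm_sub F2 hF2 e2 hx
      have hsupbdd : ∀ j, (⨆ i, (‖F2 ((zs j).1, e2 i) - F2 (z₀.1, e2 i)‖₊ : ℝ≥0∞)) ≤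
          ENNReal.ofReal (2*Cb) := by
        intro j
        refine iSup_le fun i => ?_
        rw [← enorm_eq_nnnorm, ← ofReal_norm]
        refine ENNReal.ofReal_le_ofReal ?_
        rw [Real.norm_eq_abs]
        calc |F2 ((zs j).1, e2 i) - F2 (z₀.1, e2 i)|
            ≤ |F2 ((zs j).1, e2 i)| + |F2 (z₀.1, e2 i)| := abs_sub _ _
          _ ≤ Cb + Cb := add_le_add (hgc_b _ _) (hgc_b _ _)
          _ = 2*Cb := by ring
      have hvne : ∀ j, (⨆ i, (‖F2 ((zs j).1, e2 i) - F2 (z₀.1, e2 i)‖₊ : ℝ≥0∞)) ≠ ⊤ :=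
        fun j => ((hsupbdd j).trans_lt ENNReal.ofReal_lt_top).ne
      set v : ℕ → ℝ := fun j =>
        (⨆ i, (‖F2 ((zs j).1, e2 i) - F2 (z₀.1, e2 i)‖₊ : ℝ≥0∞)).toReal with hv_def
      have hv : Filter.Tendsto v Filter.atTop (nhds 0) := by
        simpa [hv_def, Function.comp_def] using (ENNReal.tendsto_toReal (by simp)).comp hsup
      have hdom2 : ∀ j (ta : Icc (0:ℝ) T × A),
          |F2 ((zs j).1, ta) - F2 (z₀.1, ta)| ≤ v j := by
        intro j ta
        have hfc : Continuous fun ta : Icc (0:ℝ) T × A =>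
            F2 ((zs j).1, ta) - F2 (z₀.1, ta) :=
          (hF2.comp (continuous_const.prodMk continuous_id)).sub
            (hF2.comp (continuous_const.prodMk continuous_id))
        have h1 := RCFAux.nnnorm_le_iSup_of_denseRange he2 hfc ta
        calc |F2 ((zs j).1, ta) - F2 (z₀.1, ta)|
            = ((‖F2 ((zs j).1, ta) - F2 (z₀.1, ta)‖₊ : ℝ≥0∞)).toReal := by
              simp [Real.norm_eq_abs]
          _ ≤ v j := ENNReal.toReal_mono (hvne j) h1
      have hintF2 : ∀ (x : C(Icc (0 : ℝ) T, EuclideanSpace ℝ (Fin d)))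
          (q : RelaxedControls T A),
          Integrable (fun ta : Icc (0:ℝ) T × A => F2 (x, ta)) q.1.toMeasure := by
        intro x q
        refine ⟨((hF2.comp (continuous_const.prodMk
          continuous_id)).measurable).aestronglyMeasurable,
          HasFiniteIntegral.of_bounded (C := Cb) ?_⟩
        exact Filter.Eventually.of_forall fun ta => by
          rw [Real.norm_eq_abs]; exact hgc_b _ _
      have hsplit : ∀ j, |FF (zs j) - FF z₀| ≤ v j +
          |(∫ ta : Icc (0:ℝ) T × A, F2 (z₀.1, ta) ∂((zs j).2.1.toMeasure)) -
            (∫ ta : Icc (0:ℝ) T × A, F2 (z₀.1, ta) ∂(z₀.2.1.toMeasure))| := by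
        intro j
        have h12 : |FF (zs j) - ∫ ta : Icc (0:ℝ) T × A, F2 (z₀.1, ta)
            ∂((zs j).2.1.toMeasure)| ≤ v j := by
          show |(∫ ta : Icc (0:ℝ) T × A, F2 ((zs j).1, ta) ∂((zs j).2.1.toMeasure)) -
            (∫ ta : Icc (0:ℝ) T × A, F2 (z₀.1, ta) ∂((zs j).2.1.toMeasure))| ≤ v j
          rw [← integral_sub (hintF2 _ _) (hintF2 _ _)]
          calc |∫ ta : Icc (0:ℝ) T × A, (F2 ((zs j).1, ta) - F2 (z₀.1, ta))
                ∂((zs j).2.1.toMeasure)|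
              ≤ ∫ ta : Icc (0:ℝ) T × A, |F2 ((zs j).1, ta) - F2 (z₀.1, ta)|
                ∂((zs j).2.1.toMeasure) := by
                simpa [Real.norm_eq_abs] using norm_integral_le_integral_norm
                  (μ := (zs j).2.1.toMeasure) (f := fun ta : Icc (0:ℝ) T × A =>
                    F2 ((zs j).1, ta) - F2 (z₀.1, ta))
            _ ≤ ∫ _ta : Icc (0:ℝ) T × A, v j ∂((zs j).2.1.toMeasure) :=
                integral_mono ((hintF2 _ _).sub (hintF2 _ _)).abs (integrable_const _)
                  (hdom2 j)
            _ = v j := by simp [measure_univ]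
        have tri := abs_sub_le (FF (zs j))
          (∫ ta : Icc (0:ℝ) T × A, F2 (z₀.1, ta) ∂((zs j).2.1.toMeasure)) (FF z₀)
        have hFz : FF z₀ = ∫ ta : Icc (0:ℝ) T × A, F2 (z₀.1, ta) ∂(z₀.2.1.toMeasure) := rfl
        rw [hFz] at tri ⊢
        linarith
      have hq : Filter.Tendsto (fun j => ∫ ta : Icc (0:ℝ) T × A, F2 (z₀.1, ta)
          ∂((zs j).2.1.toMeasure)) Filter.atTop
          (nhds (∫ ta : Icc (0:ℝ) T × A, F2 (z₀.1, ta) ∂(z₀.2.1.toMeasure))) := by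
        have hqtend : Filter.Tendsto (fun j => (zs j).2.1) Filter.atTop (nhds z₀.2.1) :=
          ((continuous_subtype_val.comp continuous_snd).tendsto z₀).comp hzs
        exact ProbabilityMeasure.tendsto_iff_forall_integral_tendsto.mp hqtend
          (BoundedContinuousFunction.mkOfCompact
            ⟨fun ta => F2 (z₀.1, ta), hF2.comp (continuous_const.prodMk continuous_id)⟩)
      have h3 : Filter.Tendsto (fun j => |(∫ ta : Icc (0:ℝ) T × A, F2 (z₀.1, ta)
          ∂((zs j).2.1.toMeasure)) - (∫ ta : Icc (0:ℝ) T × A, F2 (z₀.1, ta)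
          ∂(z₀.2.1.toMeasure))|) Filter.atTop (nhds 0) := by
        have := hq.sub (tendsto_const_nhds (x := ∫ ta : Icc (0:ℝ) T × A, F2 (z₀.1, ta)
          ∂(z₀.2.1.toMeasure)))
        simpa using this.abs
      have hdiff0 : Filter.Tendsto (fun j => FF (zs j) - FF z₀) Filter.atTop (nhds 0) := by
        refine squeeze_zero_norm (fun j => ?_) (by simpa using hv.add h3)
        rw [Real.norm_eq_abs]
        exact hsplit j
      exact tendsto_sub_nhds_zero_iff.mp hdiff0
    have hFFint : ∀ ν : ProbabilityMeasure (C(Icc (0 : ℝ) T,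
        EuclideanSpace ℝ (Fin d)) × RelaxedControls T A),
        Integrable FF ν.toMeasure := by
      intro ν
      refine ⟨hFFcont.measurable.aestronglyMeasurable,
        HasFiniteIntegral.of_bounded (C := Cb) ?_⟩
      exact Filter.Eventually.of_forall fun xq => by rw [Real.norm_eq_abs]; exact hFFb xq
    -- the good-set bound comparing G m₀ with FF
    have herr_meas : Measurable fun t => ‖Θ t - gc t‖ := by
      have heq : (fun t => ‖Θ t - gc t‖) = fun t => dist (Θ t) (gc t) := by
        funext t; rw [dist_eq_norm]
      rw [heq]
      exact hΘmeas.dist hgc_cont.measurable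
    have hGood2 : ∀ xq, xq ∉ Bad → |G m₀ xq - FF xq| ≤ ε/8 := by
      intro xq hxq
      have hxnorm : ‖xq.1‖ < R := not_le.mp hxq
      have hmem : ∀ s : Icc (0:ℝ) T, xq.1 s ∈ B := fun s => by
        rw [hB_def, Metric.mem_closedBall, dist_zero_right]
        exact (xq.1.norm_coe_le_norm s).trans hxnorm.le
      have heq2 : ∀ ta : Icc (0:ℝ) T × A, gc ta.1 (Pi' (xq.1 ta.1), ta.2) =
          gc ta.1 (⟨xq.1 ta.1, hmem ta.1⟩, ta.2) := by
        intro ta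
        congr 1
        exact Prod.ext (Subtype.ext (hPiid _ ((xq.1.norm_coe_le_norm ta.1).trans
          hxnorm.le))) rfl
      have hintG : Integrable (fun ta : Icc (0:ℝ) T × A =>
          ψ ta.1 (xq.1 ta.1) (μc m₀ ta.1) ta.2) xq.2.1.toMeasure := by
        refine ⟨((hinteg_meas m₀).comp
          (measurable_const.prodMk measurable_id)).aestronglyMeasurable,
          HasFiniteIntegral.of_bounded (C := Cb) ?_⟩
        exact Filter.Eventually.of_forall fun ta => by
          rw [Real.norm_eq_abs]; exact hψb _ _ _ _
      have hintF : Integrable (fun ta : Icc (0:ℝ) T × A =>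
          gc ta.1 (Pi' (xq.1 ta.1), ta.2)) xq.2.1.toMeasure := by
        refine ⟨((hF2.comp (continuous_const.prodMk
          continuous_id)).measurable).aestronglyMeasurable,
          HasFiniteIntegral.of_bounded (C := Cb) ?_⟩
        exact Filter.Eventually.of_forall fun ta => by
          rw [Real.norm_eq_abs]; exact hgc_b _ _
      have hint_err : Integrable (fun ta : Icc (0:ℝ) T × A => ‖Θ ta.1 - gc ta.1‖)
          xq.2.1.toMeasure := by
        refine ⟨(herr_meas.comp measurable_fst).aestronglyMeasurable,
          HasFiniteIntegral.of_bounded (C := 2*Cb) ?_⟩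
        refine Filter.Eventually.of_forall fun ta => ?_
        rw [Real.norm_eq_abs, abs_of_nonneg (norm_nonneg _)]
        calc ‖Θ ta.1 - gc ta.1‖ ≤ ‖Θ ta.1‖ + ‖gc ta.1‖ := norm_sub_le _ _
          _ ≤ Cb + Cb := add_le_add (hΘb _) ((ContinuousMap.norm_le _ hCb0).mpr
            fun p => by rw [Real.norm_eq_abs]; exact hgc_b _ _)
          _ = 2*Cb := by ring
      have hmono2 : ∀ ta : Icc (0:ℝ) T × A,
          |ψ ta.1 (xq.1 ta.1) (μc m₀ ta.1) ta.2 - gc ta.1 (Pi' (xq.1 ta.1), ta.2)| ≤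
            ‖Θ ta.1 - gc ta.1‖ := by
        intro ta
        rw [heq2 ta]
        have h1 : ψ ta.1 (xq.1 ta.1) (μc m₀ ta.1) ta.2 =
            Θ ta.1 (⟨xq.1 ta.1, hmem ta.1⟩, ta.2) := rfl
        rw [h1]
        have h2 : Θ ta.1 (⟨xq.1 ta.1, hmem ta.1⟩, ta.2) -
            gc ta.1 (⟨xq.1 ta.1, hmem ta.1⟩, ta.2) =
            (Θ ta.1 - gc ta.1) (⟨xq.1 ta.1, hmem ta.1⟩, ta.2) := by
          simp [ContinuousMap.sub_apply]
        rw [h2, ← Real.norm_eq_abs]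
        exact (Θ ta.1 - gc ta.1).norm_coe_le_norm _
      show |(∫ ta : Icc (0:ℝ) T × A, ψ ta.1 (xq.1 ta.1) (μc m₀ ta.1) ta.2
          ∂(xq.2.1.toMeasure)) - (∫ ta : Icc (0:ℝ) T × A,
          gc ta.1 (Pi' (xq.1 ta.1), ta.2) ∂(xq.2.1.toMeasure))| ≤ ε/8
      rw [← integral_sub hintG hintF]
      calc |∫ ta : Icc (0:ℝ) T × A, (ψ ta.1 (xq.1 ta.1) (μc m₀ ta.1) ta.2 -
            gc ta.1 (Pi' (xq.1 ta.1), ta.2)) ∂(xq.2.1.toMeasure)|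
          ≤ ∫ ta : Icc (0:ℝ) T × A, |ψ ta.1 (xq.1 ta.1) (μc m₀ ta.1) ta.2 -
            gc ta.1 (Pi' (xq.1 ta.1), ta.2)| ∂(xq.2.1.toMeasure) := by
            simpa [Real.norm_eq_abs] using norm_integral_le_integral_norm
              (μ := xq.2.1.toMeasure) (f := fun ta : Icc (0:ℝ) T × A =>
                ψ ta.1 (xq.1 ta.1) (μc m₀ ta.1) ta.2 - gc ta.1 (Pi' (xq.1 ta.1), ta.2))
        _ ≤ ∫ ta : Icc (0:ℝ) T × A, ‖Θ ta.1 - gc ta.1‖ ∂(xq.2.1.toMeasure) :=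
            integral_mono (hintG.sub hintF).abs hint_err hmono2
        _ = ∫ t, ‖Θ t - gc t‖ ∂lamT := hmarg xq.2 _ herr_meas.aestronglyMeasurable
        _ ≤ ∫ t, ‖Θ t - gb t‖ ∂lamT := by
            refine integral_mono ?_ ?_ hgc_err
            · refine ⟨herr_meas.aestronglyMeasurable,
                HasFiniteIntegral.of_bounded (C := 2*Cb) ?_⟩
              refine Filter.Eventually.of_forall fun t => ?_
              rw [Real.norm_eq_abs, abs_of_nonneg (norm_nonneg _)]
              calc ‖Θ t - gc t‖ ≤ ‖Θ t‖ + ‖gc t‖ := norm_sub_le _ _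
                _ ≤ Cb + Cb := add_le_add (hΘb _) ((ContinuousMap.norm_le _ hCb0).mpr
                  fun p => by rw [Real.norm_eq_abs]; exact hgc_b _ _)
                _ = 2*Cb := by ring
            · exact (hΘint.sub (BoundedContinuousFunction.integrable _ gb)).norm
        _ ≤ ε/8 := hgb_err
    have hPt2 : ∀ xq, |G m₀ xq - FF xq| ≤ ε/8 + Bad.indicator (fun _ => 2*Cb) xq := by
      intro xq
      by_cases hxq : xq ∈ Bad
      · rw [indicator_of_mem hxq]
        have h1 : |G m₀ xq - FF xq| ≤ 2*Cb := by
          calc |G m₀ xq - FF xq| ≤ |G m₀ xq| + |FF xq| := abs_sub _ _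
            _ ≤ Cb + Cb := add_le_add (hGb _ _) (hFFb _)
            _ = 2*Cb := by ring
        linarith
      · rw [indicator_of_notMem hxq, add_zero]
        exact hGood2 xq hxq
    -- integral comparison machine
    have int_diff_le : ∀ (ν : ProbabilityMeasure (C(Icc (0 : ℝ) T,
        EuclideanSpace ℝ (Fin d)) × RelaxedControls T A)) (f g :
        (C(Icc (0 : ℝ) T, EuclideanSpace ℝ (Fin d)) × RelaxedControls T A) → ℝ),
        Integrable f ν.toMeasure → Integrable g ν.toMeasure → ∀ c : ℝ,
        (∀ xq, |f xq - g xq| ≤ c + Bad.indicator (fun _ => 2*Cb) xq) →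
        |(∫ xq, f xq ∂ν.toMeasure) - (∫ xq, g xq ∂ν.toMeasure)| ≤
          c + 2*Cb * (ν.toMeasure Bad).toReal := by
      intro ν f g hf hg c hpt
      have hboundint : Integrable (fun xq => c + Bad.indicator (fun _ => 2*Cb) xq)
          ν.toMeasure :=
        (integrable_const c).add ((integrable_const (2*Cb)).indicator hBadMeas)
      rw [← integral_sub hf hg]
      calc |∫ xq, (f xq - g xq) ∂ν.toMeasure|
          ≤ ∫ xq, |f xq - g xq| ∂ν.toMeasure := by
            simpa [Real.norm_eq_abs] using norm_integral_le_integral_norm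
              (μ := ν.toMeasure) (f := fun xq => f xq - g xq)
        _ ≤ ∫ xq, (c + Bad.indicator (fun _ => 2*Cb) xq) ∂ν.toMeasure :=
            integral_mono (hf.sub hg).abs hboundint hpt
        _ = c + 2*Cb * (ν.toMeasure Bad).toReal := by
            rw [integral_add (integrable_const c)
              ((integrable_const (2*Cb)).indicator hBadMeas), integral_const,
              integral_indicator_const _ hBadMeas]
            simp [measure_univ, smul_eq_mul, mul_comm]
            left; rw [← ProbabilityMeasure.ennreal_coeFn_eq_coeFn_toMeasure, ENNReal.coe_toReal]
    -- bad-set mass control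
    have hb0 : (m₀.toMeasure Bad).toReal < εB :=
      (ENNReal.lt_ofReal_iff_toReal_lt (measure_ne_top _ _)).mp hRBad
    have hbn : ∀ᶠ n in Filter.atTop, ((ms n).toMeasure Bad).toReal < εB := by
      have hlimsup := ProbabilityMeasure.limsup_measure_closed_le_of_tendsto hms hBadClosed
      have hev2 : ∀ᶠ n in Filter.atTop, ((ms n).toMeasure) Bad < ENNReal.ofReal εB :=
        Filter.eventually_lt_of_limsup_lt (lt_of_le_of_lt hlimsup hRBad)
      filter_upwards [hev2] with n hn
      exact (ENNReal.lt_ofReal_iff_toReal_lt (measure_ne_top _ _)).mp hn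
    -- weak convergence term
    have hT3 : ∀ᶠ n in Filter.atTop,
        |(∫ xq, FF xq ∂(ms n).toMeasure) - (∫ xq, FF xq ∂m₀.toMeasure)| < ε/8 := by
      have h1 := ProbabilityMeasure.tendsto_iff_forall_integral_tendsto.mp hms
        (BoundedContinuousFunction.ofNormedAddCommGroup FF hFFcont Cb
          (fun xq => by rw [Real.norm_eq_abs]; exact hFFb xq))
      have h2 := Metric.tendsto_nhds.mp h1 (ε/8) (by linarith)
      filter_upwards [h2] with n hn
      rwa [Real.dist_eq] at hn
    have hUev : ∀ᶠ n in Filter.atTop, u n < ε/8 :=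
      hutend.eventually_lt_const (by linarith)
    -- final assembly
    filter_upwards [hbn, hT3, hUev] with n hbn' hT3' hU'
    rw [Real.dist_eq]
    have hT1 := int_diff_le (ms n) (G (ms n)) (G m₀) (hGint _ _) (hGint _ _) (u n) (hPt1 n)
    have hT2 := int_diff_le (ms n) (G m₀) FF (hGint _ _) (hFFint _) (ε/8) hPt2
    have hT4 := int_diff_le m₀ (G m₀) FF (hGint _ _) (hFFint _) (ε/8) hPt2
    have hbnn : 0 ≤ ((ms n).toMeasure Bad).toReal := ENNReal.toReal_nonneg
    have hb0n : 0 ≤ (m₀.toMeasure Bad).toReal := ENNReal.toReal_nonneg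
    have hbn2 : 2*Cb * ((ms n).toMeasure Bad).toReal ≤ ε/8 :=
      le_trans (mul_le_mul_of_nonneg_left hbn'.le (by linarith)) h2CbεB
    have hb02 : 2*Cb * (m₀.toMeasure Bad).toReal ≤ ε/8 :=
      le_trans (mul_le_mul_of_nonneg_left hb0.le (by linarith)) h2CbεB
    have tri1 := abs_sub_le (∫ xq, G (ms n) xq ∂(ms n).toMeasure)
      (∫ xq, G m₀ xq ∂(ms n).toMeasure) (∫ xq, G m₀ xq ∂m₀.toMeasure)
    have tri2 := abs_sub_le (∫ xq, G m₀ xq ∂(ms n).toMeasure)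
      (∫ xq, FF xq ∂(ms n).toMeasure) (∫ xq, G m₀ xq ∂m₀.toMeasure)
    have tri3 := abs_sub_le (∫ xq, FF xq ∂(ms n).toMeasure)
      (∫ xq, FF xq ∂m₀.toMeasure) (∫ xq, G m₀ xq ∂m₀.toMeasure)
    have hT4' : |(∫ xq, FF xq ∂m₀.toMeasure) - (∫ xq, G m₀ xq ∂m₀.toMeasure)| ≤
        ε/8 + 2*Cb * (m₀.toMeasure Bad).toReal := by
      rw [abs_sub_comm]; exact hT4
    linarith
  exact key


end
end

section
/- Let (Y_t)_{t∈[0,T]} be a continuous stochastic process with values in a Polish space E, defined on a probability space (Ω,𝓕,ℙ), and let h : E → ℝ be continuous. Let (a_t)_{t∈[0,T]} be a jointly measurable real-valued process with E∫₀^T |a_t| dt < ∞, and suppose that h(Y_t) = h(Y_0) + ∫₀ᵗ a_s ds almost surely, for almost every t ∈ [0,T]. Let â : [0,T] × C([0,T];E) → ℝ be progressively measurable (Borel measurable with â(t,x) = â(t,y) whenever x_s = y_s for all s ≤ t) and satisfy â(t,Y) = E[a_t | 𝓕^Y_t] almost surely, for almost every t ∈ [0,T], where 𝓕^Y_t :=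 σ(Y_s : s ≤ t). Then almost surely, h(Y_t) = h(Y_0) + ∫₀ᵗ â(s,Y) ds for ALL t ∈ [0,T]. -/
open MeasureTheory Set TopologicalSpace Filter Metric
open scoped ENNReal Topology

noncomputable section

theorem measurable_continuousMap_of_eval
    {K : Type*} [TopologicalSpace K] [CompactSpace K] [LocallyCompactSpace K]
    [SecondCountableTopology K]
    {X : Type*} [MetricSpace X] [SecondCountableTopology X]
    [MeasurableSpace X] [BorelSpace X]
    [MeasurableSpace C(K, X)] [BorelSpace C(K, X)]
    {Ω : Type*} [MeasurableSpace Ω] (Z : Ω → C(K, X))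
    (hZ : ∀ t, Measurable fun ω => Z ω t) : Measurable Z := by
  obtain ⟨Q, hQc, hQd⟩ := TopologicalSpace.exists_countable_dense K
  have hball : ∀ (g : C(K, X)) (r : ℝ), 0 ≤ r →
      MeasurableSet (Z ⁻¹' Metric.closedBall g r) := by
    intro g r hr
    have heq : Z ⁻¹' Metric.closedBall g r = ⋂ q ∈ Q, {ω | dist (Z ω q) (g q) ≤ r} := by
      ext ω
      simp only [mem_preimage, Metric.mem_closedBall, mem_iInter, mem_setOf_eq]
      constructor
      · intro hd q _
        exact (ContinuousMap.dist_apply_le_dist q).trans hd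
      · intro hq
        rw [ContinuousMap.dist_le hr]
        intro x
        have hclosed : IsClosed {y : K | dist (Z ω y) (g y) ≤ r} :=
          isClosed_le (by continuity) continuous_const
        have hsub : Q ⊆ {y : K | dist (Z ω y) (g y) ≤ r} := fun q hqQ => hq q hqQ
        exact (hclosed.closure_subset_iff.2 hsub) (by rw [hQd.closure_eq]; trivial)
    rw [heq]
    exact MeasurableSet.biInter hQc fun q _ =>
      measurableSet_le (measurable_dist.comp ((hZ q).prodMk measurable_const)) measurable_const
  apply measurable_of_isOpen
  intro U hU
  obtain ⟨D, hDc, hDd⟩ := TopologicalSpace.exists_countable_dense C(K, X)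
  let P : Set (C(K, X) × ℚ) := {p | p.1 ∈ D ∧ 0 < p.2 ∧ Metric.closedBall p.1 (p.2 : ℝ) ⊆ U}
  have hUeq : U = ⋃ p ∈ P, Metric.closedBall p.1 (p.2 : ℝ) := by
    apply Subset.antisymm
    · intro x hx
      obtain ⟨ε, hε, hballsub⟩ := Metric.isOpen_iff.1 hU x hx
      obtain ⟨q, hq0, hqε⟩ := exists_rat_btwn (half_pos hε)
      have hq0' : (0:ℝ) < q := by exact_mod_cast hq0
      obtain ⟨c, hcD, hcx⟩ := hDd.exists_dist_lt x hq0'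
      have hsub : Metric.closedBall c (q : ℝ) ⊆ U := by
        intro y hy
        apply hballsub
        have h1 : dist y c ≤ (q:ℝ) := Metric.mem_closedBall.1 hy
        have h2 : dist c x < (q:ℝ) := by rwa [dist_comm]
        calc dist y x ≤ dist y c + dist c x := dist_triangle _ _ _
          _ < q + q := by linarith
          _ < ε := by
            have : (q:ℝ) < ε/2 := hqε
            linarith
      refine mem_biUnion (show (⟨c, q⟩ : C(K,X) × ℚ) ∈ P from ⟨hcD, by exact_mod_cast hq0', hsub⟩) ?_
      exact Metric.mem_closedBall.2 hcx.le
    · intro x hx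
      simp only [mem_iUnion] at hx
      obtain ⟨p, hp, hxp⟩ := hx
      exact hp.2.2 hxp
  rw [hUeq, preimage_iUnion₂]
  have hPc : P.Countable := (hDc.prod (countable_univ : (univ : Set ℚ).Countable)).mono (fun p hp => mem_prod.2 ⟨hp.1, mem_univ _⟩)
  exact MeasurableSet.biUnion hPc fun p hp => hball p.1 (p.2 : ℝ) (le_of_lt (by exact_mod_cast hp.2.1))

theorem eq_on_Icc_of_ae_eq {T : ℝ} (hT : 0 < T) {f g : ℝ → ℝ}
    (hf : ContinuousOn f (Icc 0 T)) (hg : ContinuousOn g (Icc 0 T))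
    (hae : ∀ᵐ t ∂((volume : Measure ℝ).restrict (Icc (0 : ℝ) T)), f t = g t) :
    ∀ t ∈ Icc (0 : ℝ) T, f t = g t := by
  set S : Set ℝ := Icc (0:ℝ) T ∩ (fun t => f t - g t) ⁻¹' {0} with hSdef
  have hSclosed : IsClosed S := (hf.sub hg).preimage_isClosed_of_isClosed isClosed_Icc
    isClosed_singleton
  have hbad : (volume : Measure ℝ) ({t | ¬ f t = g t} ∩ Icc 0 T) = 0 := by
    have := ae_iff.1 hae
    rwa [Measure.restrict_apply' measurableSet_Icc] at this
  have hdense : Icc (0:ℝ) T ⊆ closure S := by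
    intro t ht
    rw [_root_.mem_closure_iff]
    intro U hU htU
    by_contra hne
    rw [not_nonempty_iff_eq_empty] at hne
    -- U ∩ Icc ⊆ bad set
    have hsub : U ∩ Icc (0:ℝ) T ⊆ {t | ¬ f t = g t} ∩ Icc 0 T := by
      rintro x ⟨hxU, hxI⟩
      refine ⟨fun hx => ?_, hxI⟩
      have : x ∈ U ∩ S := ⟨hxU, hxI, by simp [hx]⟩
      rw [hne] at this
      exact this
    have hle : (volume : Measure ℝ) (U ∩ Icc 0 T) = 0 :=
      le_antisymm (hbad ▸ measure_mono hsub) zero_le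
    -- but U ∩ Icc has positive measure
    obtain ⟨ε, hε, hball⟩ := Metric.isOpen_iff.1 hU t htU
    have hIoo : Ioo (max (t - ε) 0) (min (t + ε) T) ⊆ U ∩ Icc 0 T := by
      rintro y ⟨hy1, hy2⟩
      have h1 : t - ε < y := lt_of_le_of_lt (le_max_left _ _) hy1
      have h2 : y < t + ε := lt_of_lt_of_le hy2 (min_le_left _ _)
      refine ⟨hball ?_, le_of_lt (lt_of_le_of_lt (le_max_right _ _) hy1),
        le_of_lt (lt_of_lt_of_le hy2 (min_le_right _ _))⟩
      rw [Real.ball_eq_Ioo]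
      exact ⟨h1, h2⟩
    have hlt : max (t - ε) 0 < min (t + ε) T := by
      rw [max_lt_iff, lt_min_iff, lt_min_iff]
      exact ⟨⟨by linarith, lt_of_lt_of_le (by linarith : t - ε < t) ht.2⟩,
        ⟨by have := ht.1; linarith, hT⟩⟩
    have : (0:ℝ≥0∞) < volume (Ioo (max (t - ε) 0) (min (t + ε) T)) := by
      rw [Real.volume_Ioo]
      simpa using sub_pos.2 hlt
    exact absurd (le_antisymm (hle ▸ measure_mono hIoo) zero_le) (ne_of_gt this)
  intro t ht
  have : t ∈ S := by
    rw [← hSclosed.closure_eq]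
    exact hdense ht
  have := this.2
  simpa [sub_eq_zero] using this

theorem lebesgue_step {T : ℝ} (hT : 0 < T) {f : ℝ → ℝ}
    (hint : IntegrableOn f (Icc 0 T) volume) :
    ∀ᵐ t ∂((volume : Measure ℝ).restrict (Icc (0:ℝ) T)), Tendsto (fun n : ℕ =>
      ((n:ℝ)+1) * ∫ s in (t - 1/((n:ℝ)+1))..t, f s) atTop (𝓝 (f t)) := by
  set g : ℝ → ℝ := (Icc (0:ℝ) T).indicator f with hgdef
  have hg : Integrable g volume := (integrable_indicator_iff measurableSet_Icc).2 hint
  have hgl : LocallyIntegrable g volume := hg.locallyIntegrable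
  have H := IsUnifLocDoublingMeasure.ae_tendsto_average (μ := (volume : Measure ℝ)) hgl 1
  have h0 : ∀ᵐ t ∂((volume : Measure ℝ).restrict (Icc (0:ℝ) T)), t ≠ 0 := by
    rw [ae_iff]
    have : {t : ℝ | ¬ t ≠ 0} = {0} := by ext x; simp
    rw [this]
    exact le_antisymm (le_trans (Measure.restrict_le_self _) (by simp)) zero_le
  filter_upwards [ae_restrict_of_ae H, ae_restrict_mem measurableSet_Icc, h0] with t hH htI ht0
  have ht0' : (0:ℝ) < t := lt_of_le_of_ne htI.1 (Ne.symm ht0)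
  set δ : ℕ → ℝ := fun n => 1/(2*((n:ℝ)+1)) with hδdef
  have hδpos : ∀ n, 0 < δ n := fun n => by positivity
  have hδlim : Tendsto δ atTop (𝓝[>] 0) := by
    apply tendsto_nhdsWithin_of_tendsto_nhds_of_eventually_within
    · have h1 : Tendsto (fun n : ℕ => 1/((n:ℝ)+1)) atTop (𝓝 0) :=
        tendsto_one_div_add_atTop_nhds_zero_nat
      have h2 := h1.const_mul (1/2 : ℝ)
      simp only [mul_zero] at h2
      have h3 : δ = fun n : ℕ => (1/2 : ℝ) * (1/((n:ℝ)+1)) := by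
        funext n
        rw [hδdef]
        have hne : ((n:ℝ)+1) ≠ 0 := by positivity
        field_simp
      rw [h3]
      exact h2
    · exact Eventually.of_forall fun n => hδpos n
  have hmem : ∀ᶠ n : ℕ in atTop, t ∈ closedBall (t - δ n) (1 * δ n) := by
    refine Eventually.of_forall fun n => ?_
    rw [mem_closedBall, one_mul, Real.dist_eq, abs_of_nonneg (by linarith [hδpos n])]
    linarith
  have H2 := hH (fun n => t - δ n) δ hδlim hmem
  have hev : ∀ᶠ n : ℕ in atTop,
      (⨍ y in closedBall (t - δ n) (δ n), g y) =
        ((n:ℝ)+1) * ∫ s in (t - 1/((n:ℝ)+1))..t, f s := by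
    have hlt : ∀ᶠ n : ℕ in atTop, 1/((n:ℝ)+1) < t :=
      tendsto_one_div_add_atTop_nhds_zero_nat.eventually_lt_const ht0'
    filter_upwards [hlt] with n hn
    have hδn : 2 * δ n = 1/((n:ℝ)+1) := by
      rw [hδdef]
      field_simp
    have hball : closedBall (t - δ n) (δ n) = Icc (t - 1/((n:ℝ)+1)) t := by
      rw [Real.closedBall_eq_Icc,
        show t - δ n - δ n = t - 1/((n:ℝ)+1) by rw [← hδn]; ring,
        show t - δ n + δ n = t by ring]
    rw [hball, setAverage_eq, Real.volume_real_Icc_of_le (sub_le_self t (by positivity)),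
      show t - (t - 1/((n:ℝ)+1)) = 1/((n:ℝ)+1) by ring]
    have hIccsub : Icc (t - 1/((n:ℝ)+1)) t ⊆ Icc (0:ℝ) T :=
      fun x hx => ⟨le_trans (by linarith) hx.1, le_trans hx.2 htI.2⟩
    have hgf : (∫ y in Icc (t - 1/((n:ℝ)+1)) t, g y) = ∫ s in (t - 1/((n:ℝ)+1))..t, f s := by
      rw [intervalIntegral.integral_of_le (sub_le_self t (by positivity)),
        ← integral_Icc_eq_integral_Ioc]
      exact setIntegral_congr_fun measurableSet_Icc fun x hx => indicator_of_mem (hIccsub hx) f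
    rw [hgf, smul_eq_mul, one_div, inv_inv]
  have hgt : g t = f t := indicator_of_mem htI f
  rw [← hgt]
  exact H2.congr' hev

/-- Projection lemma (zero noise case): if `h(Y_t) = h(Y_0) + ∫₀ᵗ a_s ds` a.s. for a.e. `t`,
and `â(t,Y)` is a progressively measurable version of `E[a_t | 𝓕^Y_t]`, then almost surely
`h(Y_t) = h(Y_0) + ∫₀ᵗ â(s,Y) ds` for all `t ∈ [0,T]`. -/
theorem projection_lemma_zero_noise
    {T : ℝ} (hT : 0 < T)
    {E : Type} [TopologicalSpace E] [PolishSpace E] [MeasurableSpace E] [BorelSpace E]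
    [MeasurableSpace C(Icc (0 : ℝ) T, E)] [BorelSpace C(Icc (0 : ℝ) T, E)]
    {Ω : Type} [MeasurableSpace Ω] (ℙ : Measure Ω) [IsProbabilityMeasure ℙ]
    -- the continuous process Y, as a random continuous path
    (Y : Ω → C(Icc (0 : ℝ) T, E))
    (hYmeas : ∀ t : Icc (0 : ℝ) T, Measurable fun ω => Y ω t)
    (h : E → ℝ) (hh : Continuous h)
    -- the jointly measurable integrand a with E ∫₀ᵀ |a_t| dt < ∞
    (a : ℝ → Ω → ℝ)
    (hameas : Measurable (Function.uncurry a))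
    (haint : Integrable (Function.uncurry a)
      (((volume : Measure ℝ).restrict (Icc (0 : ℝ) T)).prod ℙ))
    -- the dynamics: for a.e. t, a.s., h(Y_t) = h(Y_0) + ∫₀ᵗ a_s ds
    (hdyn : ∀ᵐ t ∂((volume : Measure ℝ).restrict (Icc (0 : ℝ) T)), ∀ᵐ ω ∂ℙ,
      h (Y ω (projIcc 0 T hT.le t)) =
        h (Y ω ⟨0, left_mem_Icc.mpr hT.le⟩) + ∫ s in (0 : ℝ)..t, a s ω)
    -- â : progressively measurable version of the conditional expectation
    (ahat : ℝ → C(Icc (0 : ℝ) T, E) → ℝ)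
    (hahatmeas : Measurable (Function.uncurry ahat))
    (hahatprog : ∀ t ∈ Icc (0 : ℝ) T, ∀ x y : C(Icc (0 : ℝ) T, E),
      (∀ s : Icc (0 : ℝ) T, (s : ℝ) ≤ t → x s = y s) → ahat t x = ahat t y)
    (hcond : ∀ᵐ t ∂((volume : Measure ℝ).restrict (Icc (0 : ℝ) T)),
      (fun ω => ahat t (Y ω)) =ᵐ[ℙ]
        MeasureTheory.condExp
          (⨆ (s : Icc (0 : ℝ) T) (_ : (s : ℝ) ≤ t),
            MeasurableSpace.comap (fun ω => Y ω s) inferInstance) ℙ (a t)) :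
    ∀ᵐ ω ∂ℙ, ∀ t ∈ Icc (0 : ℝ) T,
      h (Y ω (projIcc 0 T hT.le t)) =
        h (Y ω ⟨0, left_mem_Icc.mpr hT.le⟩) + ∫ s in (0 : ℝ)..t, ahat s (Y ω) := by
  classical
  letI := upgradeIsCompletelyMetrizable E
  have hIcc : MeasurableSet (Icc (0:ℝ) T) := measurableSet_Icc
  set μ : Measure ℝ := (volume : Measure ℝ).restrict (Icc (0 : ℝ) T) with hμdef
  haveI : IsFiniteMeasure μ := by
    constructor
    rw [hμdef, Measure.restrict_apply_univ]
    exact measure_Icc_lt_top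
  set π : ℝ → Icc (0:ℝ) T := projIcc 0 T hT.le with hπdef
  set z : Icc (0:ℝ) T := ⟨0, left_mem_Icc.mpr hT.le⟩ with hzdef
  -- measurability of Y and friends
  have hYm : Measurable Y := measurable_continuousMap_of_eval Y hYmeas
  have hev : Measurable fun p : ℝ × Ω => Y p.2 (π p.1) := by
    have h1 : Measurable fun p : ℝ × Ω => (Y p.2, π p.1) :=
      (hYm.comp measurable_snd).prodMk ((continuous_projIcc.measurable).comp measurable_fst)
    exact (continuous_eval.measurable).comp h1
  have hH : Measurable fun p : ℝ × Ω => h (Y p.2 (π p.1)) := hh.measurable.comp hev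
  have hH0 : Measurable fun ω : Ω => h (Y ω z) := hh.measurable.comp (hYmeas _)
  have hAhat : Measurable fun p : ℝ × Ω => ahat p.1 (Y p.2) :=
    hahatmeas.comp (measurable_fst.prodMk (hYm.comp measurable_snd))
  -- the primitive, jointly measurably
  set G : ℝ × Ω → ℝ := fun p => ∫ s, (Ioc (0:ℝ) p.1).indicator (fun s => a s p.2) s ∂μ
    with hGdef
  have hGmeas : Measurable G := by
    rw [hGdef]
    have hf : StronglyMeasurable fun q : (ℝ × Ω) × ℝ =>
        (Ioc (0:ℝ) q.1.1).indicator (fun s => a s q.1.2) q.2 := by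
      have hset : MeasurableSet {q : (ℝ × Ω) × ℝ | 0 < q.2 ∧ q.2 ≤ q.1.1} :=
        (measurableSet_lt measurable_const measurable_snd).inter
          (measurableSet_le measurable_snd (measurable_fst.comp measurable_fst))
      have heq : (fun q : (ℝ × Ω) × ℝ => (Ioc (0:ℝ) q.1.1).indicator (fun s => a s q.1.2) q.2)
          = {q : (ℝ × Ω) × ℝ | 0 < q.2 ∧ q.2 ≤ q.1.1}.indicator
              (fun q => a q.2 q.1.2) := by
        ext q
        by_cases hq : q.2 ∈ Ioc (0:ℝ) q.1.1
        · rw [indicator_of_mem hq, indicator_of_mem]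
          exact hq
        · rw [indicator_of_notMem hq, indicator_of_notMem]
          exact hq
      rw [heq]
      exact ((hameas.comp (measurable_snd.prodMk (measurable_snd.comp
        measurable_fst))).indicator hset).stronglyMeasurable
    exact hf.integral_prod_right'.measurable
  have hGbridge : ∀ t ∈ Icc (0:ℝ) T, ∀ ω : Ω, (∫ s in (0:ℝ)..t, a s ω) = G (t, ω) := by
    intro t ht ω
    show (∫ s in (0:ℝ)..t, a s ω) = ∫ s, (Ioc (0:ℝ) t).indicator (fun s => a s ω) s ∂μ
    rw [hμdef]
    rw [intervalIntegral.integral_of_le ht.1, integral_indicator measurableSet_Ioc,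
      Measure.restrict_restrict measurableSet_Ioc]
    congr 1
    have hsub : Ioc (0:ℝ) t ⊆ Icc (0:ℝ) T := fun x hx => mem_Icc.2 ⟨le_of_lt hx.1, hx.2.trans ht.2⟩
    rw [inter_eq_left.2 hsub]
  -- integrability facts
  have haeint : ∀ᵐ ω ∂ℙ, IntegrableOn (fun s => a s ω) (Icc (0:ℝ) T) := by
    have := haint.prod_left_ae
    filter_upwards [this] with ω hω
    rw [IntegrableOn, ← hμdef]
    exact hω
  -- Step A: pathwise dynamics for all t
  have hA : ∀ᵐ ω ∂ℙ, ∀ t ∈ Icc (0:ℝ) T,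
      h (Y ω (π t)) = h (Y ω z) + ∫ s in (0:ℝ)..t, a s ω := by
    have hset : MeasurableSet {p : ℝ × Ω | p.1 ∈ Icc (0:ℝ) T ∧
        h (Y p.2 (π p.1)) = h (Y p.2 z) + G p} :=
      (hIcc.preimage measurable_fst).inter
        (measurableSet_eq_fun hH ((hH0.comp measurable_snd).add hGmeas))
    have hmemI : ∀ᵐ t ∂μ, t ∈ Icc (0:ℝ) T := by
      rw [hμdef]
      exact ae_restrict_mem hIcc
    have hdyn1 : ∀ᵐ t ∂μ, ∀ᵐ ω ∂ℙ, (t ∈ Icc (0:ℝ) T ∧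
        h (Y ω (π t)) = h (Y ω z) + G (t, ω)) := by
      filter_upwards [hdyn, hmemI] with t hdynt htI
      filter_upwards [hdynt] with ω hω
      refine ⟨htI, ?_⟩
      rw [← hGbridge t htI ω]
      exact hω
    have hdyn2 : ∀ᵐ ω ∂ℙ, ∀ᵐ t ∂μ, (t ∈ Icc (0:ℝ) T ∧
        h (Y ω (π t)) = h (Y ω z) + G (t, ω)) :=
      (Measure.ae_ae_comm hset).1 hdyn1
    filter_upwards [hdyn2, haeint] with ω hω hint
    have hcont1 : ContinuousOn (fun t => h (Y ω (π t))) (Icc 0 T) :=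
      (hh.comp ((Y ω).continuous.comp continuous_projIcc)).continuousOn
    have hcont2 : ContinuousOn (fun t => h (Y ω z) + ∫ s in (0:ℝ)..t, a s ω) (Icc 0 T) := by
      apply continuousOn_const.add
      have h2 : IntegrableOn (fun s => a s ω) (uIcc 0 T) volume := by
        rwa [uIcc_of_le hT.le]
      simpa [uIcc_of_le hT.le] using intervalIntegral.continuousOn_primitive_interval h2
    have hae2 : ∀ᵐ t ∂((volume : Measure ℝ).restrict (Icc (0 : ℝ) T)),
        (fun t => h (Y ω (π t))) t = (fun t => h (Y ω z) + ∫ s in (0:ℝ)..t, a s ω) t := by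
      rw [← hμdef]
      filter_upwards [hω] with t htt
      rw [hGbridge t htt.1 ω]
      exact htt.2
    exact eq_on_Icc_of_ae_eq hT hcont1 hcont2 hae2
  -- Step B: Lebesgue differentiation
  have hLeb : ∀ᵐ ω ∂ℙ, ∀ᵐ t ∂μ, Tendsto
      (fun n : ℕ => ((n:ℝ)+1) * (h (Y ω (π t)) - h (Y ω (π (t - 1/((n:ℝ)+1))))))
      atTop (𝓝 (a t ω)) := by
    have h0 : ∀ᵐ t ∂((volume : Measure ℝ).restrict (Icc (0:ℝ) T)), t ≠ 0 := by
      rw [ae_iff]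
      have he : {t : ℝ | ¬ t ≠ 0} = {0} := by ext x; simp
      rw [he]
      exact le_antisymm (le_trans (Measure.restrict_le_self _) (by simp)) zero_le
    filter_upwards [haeint, hA] with ω hint hAω
    have hstep := lebesgue_step hT hint
    rw [hμdef]
    filter_upwards [hstep, ae_restrict_mem hIcc, h0] with t hft htI ht0
    have ht0' : (0:ℝ) < t := lt_of_le_of_ne htI.1 (Ne.symm ht0)
    have hev : ∀ᶠ n : ℕ in atTop,
        ((n:ℝ)+1) * ∫ s in (t - 1/((n:ℝ)+1))..t, a s ω
          = ((n:ℝ)+1) * (h (Y ω (π t)) - h (Y ω (π (t - 1/((n:ℝ)+1))))) := by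
      have hlt : ∀ᶠ n : ℕ in atTop, 1/((n:ℝ)+1) < t :=
        tendsto_one_div_add_atTop_nhds_zero_nat.eventually_lt_const ht0'
      filter_upwards [hlt] with n hn
      have hc0 : (0:ℝ) < 1/((n:ℝ)+1) := by positivity
      have htc : t - 1/((n:ℝ)+1) ∈ Icc (0:ℝ) T := ⟨by linarith, by linarith [htI.2]⟩
      have e1 := hAω t htI
      have e2 := hAω _ htc
      have i1 : IntervalIntegrable (fun s => a s ω) volume 0 t := by
        rw [intervalIntegrable_iff]
        refine hint.mono_set ?_
        rw [uIoc_of_le htI.1]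
        exact fun x hx => ⟨le_of_lt hx.1, le_trans hx.2 htI.2⟩
      have i2 : IntervalIntegrable (fun s => a s ω) volume 0 (t - 1/((n:ℝ)+1)) := by
        rw [intervalIntegrable_iff]
        refine hint.mono_set ?_
        rw [uIoc_of_le htc.1]
        exact fun x hx => ⟨le_of_lt hx.1, le_trans hx.2 htc.2⟩
      have hdiff : (∫ s in (t - 1/((n:ℝ)+1))..t, a s ω)
          = h (Y ω (π t)) - h (Y ω (π (t - 1/((n:ℝ)+1)))) := by
        rw [e1, e2, ← intervalIntegral.integral_interval_sub_left i1 i2]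
        ring
      rw [hdiff]
    exact hft.congr' hev
  -- swap
  have hLeb2 : ∀ᵐ t ∂μ, ∀ᵐ ω ∂ℙ, Tendsto
      (fun n : ℕ => ((n:ℝ)+1) * (h (Y ω (π t)) - h (Y ω (π (t - 1/((n:ℝ)+1))))))
      atTop (𝓝 (a t ω)) := by
    have hset : MeasurableSet {q : Ω × ℝ | Tendsto
        (fun n : ℕ => ((n:ℝ)+1) * (h (Y q.1 (π q.2)) - h (Y q.1 (π (q.2 - 1/((n:ℝ)+1))))))
        atTop (𝓝 (a q.2 q.1))} := by
      apply measurableSet_tendsto_fun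
      · intro n
        have hm1 : Measurable fun q : Ω × ℝ => h (Y q.1 (π q.2)) := hH.comp measurable_swap
        have hm2 : Measurable fun q : Ω × ℝ => h (Y q.1 (π (q.2 - 1/((n:ℝ)+1)))) :=
          hH.comp ((measurable_snd.sub measurable_const).prodMk measurable_fst)
        exact measurable_const.mul (hm1.sub hm2)
      · exact hameas.comp (measurable_snd.prodMk measurable_fst)
    exact (Measure.ae_ae_comm hset).1 hLeb
  -- Step C: identification of ahat with a
  have hkey : ∀ᵐ t ∂μ, (fun ω => ahat t (Y ω)) =ᵐ[ℙ] fun ω => a t ω := by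
    have hmemI : ∀ᵐ t ∂μ, t ∈ Icc (0:ℝ) T := by
      rw [hμdef]
      exact ae_restrict_mem hIcc
    have hintt : ∀ᵐ t ∂μ, Integrable (fun ω => a t ω) ℙ := haint.prod_right_ae
    filter_upwards [hLeb2, hcond, hintt, hmemI] with t hLt hct hat htI
    have hm : (⨆ (s : Icc (0 : ℝ) T) (_ : (s : ℝ) ≤ t),
        MeasurableSpace.comap (fun ω => Y ω s) inferInstance) ≤ ‹MeasurableSpace Ω› :=
      iSup_le fun s => iSup_le fun _ => (hYmeas s).comap_le
    set m : MeasurableSpace Ω := (⨆ (s : Icc (0 : ℝ) T) (_ : (s : ℝ) ≤ t),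
        MeasurableSpace.comap (fun ω => Y ω s) inferInstance) with hmdef
    haveI : SigmaFinite (ℙ.trim hm) := by
      haveI : IsFiniteMeasure (ℙ.trim hm) := isFiniteMeasure_trim hm
      infer_instance
    set fn : ℕ → Ω → ℝ := fun n ω =>
      ((n:ℝ)+1) * (h (Y ω (π t)) - h (Y ω (π (t - 1/((n:ℝ)+1))))) with hfndef
    have hfn : ∀ n, Measurable[m] (fn n) := by
      intro n
      have hme : ∀ u : ℝ, ((π u : ℝ)) ≤ t → Measurable[m] fun ω => Y ω (π u) := by
        intro u hu
        have hle : MeasurableSpace.comap (fun ω => Y ω (π u)) inferInstance ≤ m := by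
          rw [hmdef]
          exact le_iSup_of_le (π u) (le_iSup_of_le hu le_rfl)
        exact Measurable.of_comap_le hle
      have hu1 : ((π t : ℝ)) ≤ t := by
        rw [hπdef, projIcc_of_mem hT.le htI]
      have hu2 : ((π (t - 1/((n:ℝ)+1)) : ℝ)) ≤ t := by
        rw [hπdef]
        have hc : (projIcc 0 T hT.le (t - 1/((n:ℝ)+1)) : ℝ) = max 0 (min T (t - 1/((n:ℝ)+1))) :=
          rfl
        rw [hc]
        apply max_le htI.1
        refine le_trans (min_le_right _ _) ?_
        have hpos : (0:ℝ) < 1/((n:ℝ)+1) := by positivity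
        linarith
      exact measurable_const.mul ((hh.measurable.comp (hme t hu1)).sub
        (hh.measurable.comp (hme _ hu2)))
    have hconv : MeasurableSet[m] {ω | ∃ c, Tendsto (fun n => fn n ω) atTop (𝓝 c)} :=
      measurableSet_exists_tendsto hfn
    have hnull : ℙ {ω | ¬ ∃ c, Tendsto (fun n => fn n ω) atTop (𝓝 c)} = 0 := by
      have hae : ∀ᵐ ω ∂ℙ, ∃ c, Tendsto (fun n => fn n ω) atTop (𝓝 c) := by
        filter_upwards [hLt] with ω hω
        exact ⟨a t ω, hω⟩
      exact ae_iff.1 hae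
    have htrim : ∀ᵐ ω ∂(ℙ.trim hm), ∃ c, Tendsto (fun n => fn n ω) atTop (𝓝 c) := by
      rw [ae_iff]
      have hconv2 : MeasurableSet[m] {ω | ¬ ∃ c, Tendsto (fun n => fn n ω) atTop (𝓝 c)} :=
        hconv.compl
      rw [trim_measurableSet_eq hm hconv2]
      exact hnull
    obtain ⟨g, hgm, hgt⟩ := measurable_limit_of_tendsto_metrizable_ae (μ := ℙ.trim hm)
      (fun n => (hfn n).aemeasurable) htrim
    have hgt' : ∀ᵐ ω ∂ℙ, Tendsto (fun n => fn n ω) atTop (𝓝 (g ω)) := ae_of_ae_trim hm hgt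
    have hag : (fun ω => a t ω) =ᵐ[ℙ] g := by
      filter_upwards [hgt', hLt] with ω h1 h2
      exact tendsto_nhds_unique h2 h1
    have hce : ℙ[fun ω => a t ω | m] =ᵐ[ℙ] fun ω => a t ω :=
      condExp_of_aestronglyMeasurable' hm ⟨g, hgm.stronglyMeasurable, hag⟩ hat
    exact hct.trans hce
  -- swap back
  have hkey2 : ∀ᵐ ω ∂ℙ, ∀ᵐ t ∂μ, ahat t (Y ω) = a t ω := by
    have hset : MeasurableSet {p : ℝ × Ω | ahat p.1 (Y p.2) = a p.1 p.2} :=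
      measurableSet_eq_fun hAhat (hameas.comp (measurable_fst.prodMk measurable_snd))
    exact (Measure.ae_ae_comm hset).1 hkey
  -- conclusion
  filter_upwards [hA, hkey2] with ω hAω hkeyω
  intro t ht
  have hint_eq : (∫ s in (0:ℝ)..t, ahat s (Y ω)) = ∫ s in (0:ℝ)..t, a s ω := by
    apply intervalIntegral.integral_congr_ae
    have h1 : ∀ᵐ x ∂(volume : Measure ℝ), x ∈ Icc (0:ℝ) T → ahat x (Y ω) = a x ω := by
      rw [← ae_restrict_iff' hIcc, ← hμdef]
      exact hkeyω
    filter_upwards [h1] with x hx hxI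
    have hxI' : x ∈ Icc (0:ℝ) T := by
      rw [uIoc_of_le ht.1] at hxI
      exact ⟨le_of_lt hxI.1, le_trans hxI.2 ht.2⟩
    exact hx hxI'
  rw [hint_eq]
  exact hAω t ht

end
end
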